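/- arXiv:1706.08250 — 5 statements merged into one kernel-verified Lean document; each statement's English description precedes it below -/
import Mathlib

section
/- For any nondecreasing sequence of critical values τ = (τ_1, …, τ_m) ∈ [0,1]^m, the false discovery rate of the step-up procedure SU(τ) satisfies FDR(SU(τ)) ≤ Σ_{i=1}^m max_{1 ≤ k ≤ m} F_i(τ_k)/k. -/
open MeasureTheory ProbabilityTheory Finset

/-- Number of rejections of the step-up procedure with critical values `τ 1, …, τ m`
(convention `τ 0 = 0`): the largest `k ∈ {0, …, m}` such that at least `k` of the
p-values are `≤ τ k`. -/
noncomputable def numRejSU (m : ℕ) (τ : ℕ → ℝ) (q : Fin m → ℝ) : ℕ :=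
  sSup {k | k ≤ m ∧ k ≤ (univ.filter (fun j => q j ≤ τ k)).card}

/-- Rejection set of the step-up procedure. -/
noncomputable def rejSU (m : ℕ) (τ : ℕ → ℝ) (q : Fin m → ℝ) : Finset (Fin m) :=
  univ.filter (fun i => q i ≤ τ (numRejSU m τ q))

/-- False discovery proportion of a rejection set `R` w.r.t. the set of true nulls `H0`. -/
noncomputable def FDP (m : ℕ) (H0 R : Finset (Fin m)) : ℝ :=
  ((R ∩ H0).card : ℝ) / max (R.card : ℝ) 1

namespace SUaux


variable {m : ℕ} {τ : ℕ → ℝ} {q q' : Fin m → ℝ}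

lemma numRej_mem (m : ℕ) (τ : ℕ → ℝ) (q : Fin m → ℝ) :
    numRejSU m τ q ≤ m ∧
      numRejSU m τ q ≤ (univ.filter (fun j => q j ≤ τ (numRejSU m τ q))).card :=
  Nat.sSup_mem (s := {k | k ≤ m ∧ k ≤ (univ.filter (fun j => q j ≤ τ k)).card})
    ⟨0, ⟨Nat.zero_le _, Nat.zero_le _⟩⟩ ⟨m, fun _ hk => hk.1⟩

lemma le_numRej {k : ℕ} (hkm : k ≤ m) (hk : k ≤ (univ.filter (fun j => q j ≤ τ k)).card) :
    k ≤ numRejSU m τ q :=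
  le_csSup ⟨m, fun _ hl => hl.1⟩ (Set.mem_setOf_eq ▸ ⟨hkm, hk⟩)

lemma cnt_mono (hτmono : ∀ k l, k ≤ l → l ≤ m → τ k ≤ τ l) {k l : ℕ} (hkl : k ≤ l) (hlm : l ≤ m) :
    (univ.filter (fun j => q j ≤ τ k)).card ≤ (univ.filter (fun j => q j ≤ τ l)).card :=
  card_le_card (monotone_filter_right _ (fun j _ hj => hj.trans (hτmono k l hkl hlm)))

lemma card_rejSU (hτmono : ∀ k l, k ≤ l → l ≤ m → τ k ≤ τ l) :
    (rejSU m τ q).card = numRejSU m τ q := by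
  obtain ⟨h1, h2⟩ := numRej_mem m τ q
  rw [rejSU]
  refine le_antisymm ?_ h2
  by_contra hlt
  push_neg at hlt
  rcases eq_or_lt_of_le h1 with heq | hlt2
  · have hle : (univ.filter (fun j => q j ≤ τ (numRejSU m τ q))).card ≤ m := by
      simpa using card_filter_le (univ : Finset (Fin m)) _
    omega
  · have hs : numRejSU m τ q + 1 ≤ (univ.filter (fun j => q j ≤ τ (numRejSU m τ q + 1))).card :=
      le_trans hlt (cnt_mono hτmono (Nat.le_succ _) hlt2)
    have := le_numRej hlt2 hs
    omega

lemma numRej_le (h : ∀ j, q' j ≤ q j) : numRejSU m τ q ≤ numRejSU m τ q' := by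
  obtain ⟨h1, h2⟩ := numRej_mem m τ q
  exact le_numRej h1 (h2.trans (card_le_card
    (monotone_filter_right _ (fun j _ hj => (h j).trans hj))))

lemma one_le_numRej_update (hm : 1 ≤ m) (hτ1 : 0 ≤ τ 1) (i : Fin m) :
    1 ≤ numRejSU m τ (Function.update q i 0) :=
  le_numRej hm (Finset.card_pos.mpr ⟨i, Finset.mem_filter.mpr ⟨mem_univ i, by simp [hτ1]⟩⟩)

lemma update_le (hqi : 0 ≤ q i) : ∀ j, Function.update q i 0 j ≤ q j := by
  intro j
  rcases eq_or_ne j i with rfl | hne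
  · simpa using hqi
  · simp [Function.update_of_ne hne]

lemma numRej_update_eq (hτmono : ∀ k l, k ≤ l → l ≤ m → τ k ≤ τ l)
    (hτnonneg : ∀ k ≤ m, 0 ≤ τ k) {i : Fin m} (hqi : 0 ≤ q i)
    (h : q i ≤ τ (numRejSU m τ (Function.update q i 0))) :
    numRejSU m τ q = numRejSU m τ (Function.update q i 0) := by
  obtain ⟨h1, h2⟩ := numRej_mem m τ (Function.update q i 0)
  have hfe : univ.filter (fun j => q j ≤ τ (numRejSU m τ (Function.update q i 0)))
      = univ.filter (fun j => Function.update q i 0 j ≤ τ (numRejSU m τ (Function.update q i 0))) := by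
    apply filter_congr
    intro j _
    rcases eq_or_ne j i with rfl | hne
    · simp [h, hτnonneg _ h1]
    · simp [Function.update_of_ne hne]
  exact le_antisymm (numRej_le (update_le hqi)) (le_numRej h1 (by rw [hfe]; exact h2))

lemma le_tau_update (hτmono : ∀ k l, k ≤ l → l ≤ m → τ k ≤ τ l) {i : Fin m} (hqi : 0 ≤ q i)
    (h : q i ≤ τ (numRejSU m τ q)) :
    q i ≤ τ (numRejSU m τ (Function.update q i 0)) :=
  h.trans (hτmono _ _ (numRej_le (update_le hqi)) (numRej_mem m τ _).1)


lemma fdp_eq (hm : 1 ≤ m) (hτmono : ∀ k l, k ≤ l → l ≤ m → τ k ≤ τ l)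
    (hτnonneg : ∀ k ≤ m, 0 ≤ τ k) (H0 : Finset (Fin m)) (hq : ∀ j, 0 ≤ q j) :
    FDP m H0 (rejSU m τ q) =
      ∑ i ∈ H0, (if q i ≤ τ (numRejSU m τ (Function.update q i 0))
        then ((numRejSU m τ (Function.update q i 0) : ℝ))⁻¹ else 0) := by
  classical
  rw [FDP, card_rejSU hτmono]
  have hR : rejSU m τ q ∩ H0 = H0.filter (fun i => q i ≤ τ (numRejSU m τ q)) := by
    ext i
    simp [rejSU, and_comm]
  rw [hR, card_filter]
  push_cast
  rw [Finset.sum_div]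
  apply Finset.sum_congr rfl
  intro i _
  by_cases h : q i ≤ τ (numRejSU m τ q)
  · have h' : q i ≤ τ (numRejSU m τ (Function.update q i 0)) := le_tau_update hτmono (hq i) h
    have heq := numRej_update_eq hτmono hτnonneg (hq i) h'
    have h1 : 1 ≤ numRejSU m τ (Function.update q i 0) :=
      one_le_numRej_update hm (hτnonneg 1 hm) i
    rw [if_pos h, if_pos h', heq, max_eq_left (by exact_mod_cast h1), one_div]
  · have h' : ¬ q i ≤ τ (numRejSU m τ (Function.update q i 0)) := by
      intro hc
      exact h (by rw [numRej_update_eq hτmono hτnonneg (hq i) hc]; exact hc)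
    rw [if_neg h, if_neg h', zero_div]

lemma measurable_cnt (m : ℕ) (t : ℝ) :
    Measurable fun q : Fin m → ℝ => (univ.filter fun j => q j ≤ t).card := by
  simp_rw [card_filter]
  exact Finset.measurable_sum _ fun j _ =>
    Measurable.ite (measurableSet_le (measurable_pi_apply j) measurable_const)
      measurable_const measurable_const

lemma measurable_numRejSU (m : ℕ) (τ : ℕ → ℝ) : Measurable (numRejSU m τ) := by
  apply measurable_to_countable'
  intro k
  have hset : numRejSU m τ ⁻¹' {k} =
      {q : Fin m → ℝ | k ≤ m} ∩ ({q | k ≤ (univ.filter fun j => q j ≤ τ k).card} ∩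
        ⋂ l ∈ Finset.Icc (k+1) m, {q | (univ.filter fun j => q j ≤ τ l).card < l}) := by
    ext q
    simp only [Set.mem_preimage, Set.mem_singleton_iff, Set.mem_inter_iff, Set.mem_setOf_eq,
      Set.mem_iInter, Finset.mem_Icc]
    constructor
    · rintro rfl
      obtain ⟨h1, h2⟩ := numRej_mem m τ q
      refine ⟨h1, h2, fun l hl => ?_⟩
      by_contra hc
      push_neg at hc
      exact absurd (le_numRej hl.2 hc) (by omega)
    · rintro ⟨h1, h2, h3⟩
      have hk := le_numRej (τ := τ) h1 h2
      obtain ⟨g1, g2⟩ := numRej_mem m τ q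
      rcases eq_or_lt_of_le hk with heq | hlt
      · omega
      · exact absurd g2 (Nat.not_le_of_lt (h3 _ ⟨hlt, g1⟩))
  rw [hset]
  refine (MeasurableSet.const _).inter (MeasurableSet.inter ?_ ?_)
  · exact measurable_cnt m (τ k) (show MeasurableSet (Set.Ici k) by trivial)
  · exact MeasurableSet.biInter (Set.to_countable _) fun l _ => measurable_cnt m (τ l) (show MeasurableSet (Set.Iio l) by trivial)

lemma measurable_updateZero {Ω : Type*} [MeasurableSpace Ω] (p : Fin m → Ω → ℝ)
    (hmeas : ∀ i, Measurable (p i)) (i : Fin m) :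
    Measurable fun ω => Function.update (fun j => p j ω) i 0 := by
  apply measurable_pi_lambda
  intro j
  simp only [Function.update_apply]
  by_cases hj : j = i
  · simp [hj]
  · simpa [hj] using hmeas j

lemma indep_pN {Ω : Type*} [MeasurableSpace Ω] (P : Measure Ω) [IsProbabilityMeasure P]
    (τ : ℕ → ℝ) (p : Fin m → Ω → ℝ) (hmeas : ∀ i, Measurable (p i))
    (hindep : iIndepFun p P) (i : Fin m) :
    IndepFun (p i) (fun ω => numRejSU m τ (Function.update (fun j => p j ω) i 0)) P := by
  classical
  have h := hindep.indepFun_finset {i} ({i}ᶜ) disjoint_compl_right hmeas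
  have hφ : Measurable fun v : ({i} : Finset (Fin m)) → ℝ => v ⟨i, Finset.mem_singleton_self i⟩ :=
    measurable_pi_apply _
  have hψm : Measurable fun v : (({i}ᶜ : Finset (Fin m)) : Type) → ℝ =>
      numRejSU m τ (fun j => if h : j ∈ ({i}ᶜ : Finset (Fin m)) then v ⟨j, h⟩ else 0) := by
    apply (measurable_numRejSU m τ).comp
    apply measurable_pi_lambda
    intro j
    by_cases hj : j ∈ ({i}ᶜ : Finset (Fin m))
    · simp only [dif_pos hj]; exact measurable_pi_apply _
    · simp only [dif_neg hj]; exact measurable_const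
  have h2 := h.comp hφ hψm
  have e1 : (fun v : ({i} : Finset (Fin m)) → ℝ => v ⟨i, Finset.mem_singleton_self i⟩) ∘
      (fun a (j : ({i} : Finset (Fin m))) => p j a) = p i := by
    funext ω; rfl
  have e2 : (fun v : (({i}ᶜ : Finset (Fin m)) : Type) → ℝ =>
        numRejSU m τ (fun j => if h : j ∈ ({i}ᶜ : Finset (Fin m)) then v ⟨j, h⟩ else 0)) ∘
      (fun a (j : (({i}ᶜ : Finset (Fin m)) : Type)) => p j a)
      = fun ω => numRejSU m τ (Function.update (fun j => p j ω) i 0) := by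
    funext ω
    simp only [Function.comp_apply]
    congr 1
    funext j
    by_cases hj : j ∈ ({i}ᶜ : Finset (Fin m))
    · have hne : j ≠ i := by simpa using hj
      simp [dif_pos hj, Function.update_apply, hne]
    · have : j = i := by simpa using hj
      subst this
      simp [dif_neg hj]
  rw [e1, e2] at h2
  exact h2

end SUaux
section SUaux2
open MeasureTheory ProbabilityTheory Finset SUaux

variable {Ω : Type*} [MeasurableSpace Ω] {m : ℕ}

lemma measurable_N (τ : ℕ → ℝ) (p : Fin m → Ω → ℝ) (hmeas : ∀ i, Measurable (p i)) (i : Fin m) :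
    Measurable fun ω => numRejSU m τ (Function.update (fun j => p j ω) i 0) :=
  (measurable_numRejSU m τ).comp (measurable_updateZero p hmeas i)

lemma term_eq_sum (hm : 1 ≤ m) (τ : ℕ → ℝ) (hτ1 : 0 ≤ τ 1)
    (p : Fin m → Ω → ℝ) (i : Fin m) :
    (fun ω => if p i ω ≤ τ (numRejSU m τ (Function.update (fun j => p j ω) i 0))
      then ((numRejSU m τ (Function.update (fun j => p j ω) i 0) : ℝ))⁻¹ else 0)
    = fun ω => ∑ k ∈ Finset.Icc 1 m,
        Set.indicator ({ω' | numRejSU m τ (Function.update (fun j => p j ω') i 0) = k}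
          ∩ {ω' | p i ω' ≤ τ k}) (fun _ => ((k : ℝ))⁻¹) ω := by
  funext ω
  have hmem : numRejSU m τ (Function.update (fun j => p j ω) i 0) ∈ Finset.Icc 1 m :=
    Finset.mem_Icc.mpr ⟨one_le_numRej_update hm hτ1 i, (numRej_mem m τ _).1⟩
  rw [Finset.sum_eq_single_of_mem _ hmem]
  · simp only [Set.indicator_apply, Set.mem_inter_iff, Set.mem_setOf_eq]
    by_cases h : p i ω ≤ τ (numRejSU m τ (Function.update (fun j => p j ω) i 0)) <;> simp [h]
  · intro k _ hne
    apply Set.indicator_of_notMem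
    simp only [Set.mem_inter_iff, Set.mem_setOf_eq, not_and]
    intro h
    exact (hne h.symm).elim

lemma integrable_term [IsProbabilityMeasure (P : Measure Ω)] (hm : 1 ≤ m) (τ : ℕ → ℝ)
    (hτ1 : 0 ≤ τ 1) (p : Fin m → Ω → ℝ) (hmeas : ∀ i, Measurable (p i)) (i : Fin m) :
    Integrable (fun ω => if p i ω ≤ τ (numRejSU m τ (Function.update (fun j => p j ω) i 0))
      then ((numRejSU m τ (Function.update (fun j => p j ω) i 0) : ℝ))⁻¹ else 0) P := by
  rw [term_eq_sum hm τ hτ1 p i]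
  refine integrable_finset_sum _ fun k _ => (integrable_const _).indicator ?_
  exact ((measurable_N τ p hmeas i) (show MeasurableSet ({k} : Set ℕ) by trivial)).inter
    (measurableSet_le (hmeas i) measurable_const)

lemma integral_term_le (P : Measure Ω) [IsProbabilityMeasure P] (hm : 1 ≤ m) (τ : ℕ → ℝ)
    (hτ01 : ∀ k ≤ m, τ k ∈ Set.Icc (0 : ℝ) 1)
    (p : Fin m → Ω → ℝ) (hmeas : ∀ i, Measurable (p i))
    (hindep : iIndepFun p P)
    (i : Fin m) (Fi : ℝ → ℝ) (hFrange : ∀ t ∈ Set.Icc (0 : ℝ) 1, Fi t ∈ Set.Icc (0 : ℝ) 1)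
    (hnull : ∀ t ∈ Set.Icc (0 : ℝ) 1, P {ω | p i ω ≤ t} ≤ ENNReal.ofReal (Fi t)) :
    ∫ ω, (if p i ω ≤ τ (numRejSU m τ (Function.update (fun j => p j ω) i 0))
      then ((numRejSU m τ (Function.update (fun j => p j ω) i 0) : ℝ))⁻¹ else 0) ∂P
      ≤ (Finset.Icc 1 m).sup' (Finset.nonempty_Icc.mpr hm) (fun k => Fi (τ k) / (k : ℝ)) := by
  classical
  set M : ℝ := (Finset.Icc 1 m).sup' (Finset.nonempty_Icc.mpr hm) (fun k => Fi (τ k) / (k : ℝ))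
    with hM
  have hτ1 : 0 ≤ τ 1 := (hτ01 1 hm).1
  have hMnonneg : 0 ≤ M := by
    have h1 : (0:ℝ) ≤ Fi (τ 1) / ((1:ℕ):ℝ) :=
      div_nonneg (hFrange (τ 1) (hτ01 1 hm)).1 (by norm_num)
    refine h1.trans ?_
    rw [hM]
    exact Finset.le_sup' (fun k : ℕ => Fi (τ k) / (k:ℝ)) (Finset.mem_Icc.mpr ⟨le_refl 1, hm⟩)
  have hBmeas : ∀ k : ℕ, MeasurableSet {ω | numRejSU m τ (Function.update (fun j => p j ω) i 0) = k} :=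
    fun k => (measurable_N τ p hmeas i) (show MeasurableSet ({k} : Set ℕ) by trivial)
  have hAmeas : ∀ k : ℕ, MeasurableSet {ω | p i ω ≤ τ k} :=
    fun k => measurableSet_le (hmeas i) measurable_const
  rw [term_eq_sum hm τ hτ1 p i, integral_finset_sum _
    (fun k _ => (integrable_const _).indicator ((hBmeas k).inter (hAmeas k)))]
  have hsum_le : ∑ k ∈ Finset.Icc 1 m,
      (P {ω | numRejSU m τ (Function.update (fun j => p j ω) i 0) = k}).toReal ≤ 1 := by
    have hdisj : (↑(Finset.Icc 1 m) : Set ℕ).PairwiseDisjoint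
        (fun k => {ω | numRejSU m τ (Function.update (fun j => p j ω) i 0) = k}) := by
      intro a _ b _ hab
      simp only [Function.onFun]
      rw [Set.disjoint_left]
      rintro ω ha hb
      exact hab (by rw [← ha, ← hb])
    calc ∑ k ∈ Finset.Icc 1 m,
          (P {ω | numRejSU m τ (Function.update (fun j => p j ω) i 0) = k}).toReal
        = (∑ k ∈ Finset.Icc 1 m,
            P {ω | numRejSU m τ (Function.update (fun j => p j ω) i 0) = k}).toReal :=
          (ENNReal.toReal_sum (fun k _ => measure_ne_top P _)).symm
      _ = (P (⋃ k ∈ Finset.Icc 1 m,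
            {ω | numRejSU m τ (Function.update (fun j => p j ω) i 0) = k})).toReal := by
          rw [measure_biUnion_finset hdisj (fun k _ => hBmeas k)]
      _ ≤ (P Set.univ).toReal :=
          ENNReal.toReal_mono (measure_ne_top P _) (measure_mono (Set.subset_univ _))
      _ = 1 := by simp
  calc ∑ k ∈ Finset.Icc 1 m, ∫ ω, Set.indicator
        ({ω' | numRejSU m τ (Function.update (fun j => p j ω') i 0) = k}
          ∩ {ω' | p i ω' ≤ τ k}) (fun _ => ((k : ℝ))⁻¹) ω ∂P
      ≤ ∑ k ∈ Finset.Icc 1 m,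
        (P {ω | numRejSU m τ (Function.update (fun j => p j ω) i 0) = k}).toReal * M := by
        refine Finset.sum_le_sum fun k hk => ?_
        obtain ⟨hk1, hk2⟩ := Finset.mem_Icc.mp hk
        rw [integral_indicator_const _ ((hBmeas k).inter (hAmeas k)), smul_eq_mul]
        have hprod : P ({ω | numRejSU m τ (Function.update (fun j => p j ω) i 0) = k}
              ∩ {ω | p i ω ≤ τ k})
            = P {ω | numRejSU m τ (Function.update (fun j => p j ω) i 0) = k}
              * P {ω | p i ω ≤ τ k} := by
          have hind := (indep_pN P τ p hmeas hindep i).symm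
          exact hind.measure_inter_preimage_eq_mul (s := ({k} : Set ℕ)) (t := Set.Iic (τ k))
            (by trivial) measurableSet_Iic
        rw [measureReal_def, hprod, ENNReal.toReal_mul, mul_assoc]
        refine mul_le_mul_of_nonneg_left ?_ ENNReal.toReal_nonneg
        have hk0 : (0:ℝ) < (k:ℝ) := by exact_mod_cast hk1
        have hPA : (P {ω | p i ω ≤ τ k}).toReal ≤ Fi (τ k) :=
          ENNReal.toReal_le_of_le_ofReal (hFrange (τ k) (hτ01 k hk2)).1 (hnull (τ k) (hτ01 k hk2))
        calc (P {ω | p i ω ≤ τ k}).toReal * ((k:ℝ))⁻¹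
            ≤ Fi (τ k) * ((k:ℝ))⁻¹ := mul_le_mul_of_nonneg_right hPA (inv_nonneg.mpr hk0.le)
          _ = Fi (τ k) / (k:ℝ) := (div_eq_mul_inv _ _).symm
          _ ≤ M := by
              rw [hM]; exact Finset.le_sup' (fun k : ℕ => Fi (τ k) / (k:ℝ)) hk
    _ = (∑ k ∈ Finset.Icc 1 m,
          (P {ω | numRejSU m τ (Function.update (fun j => p j ω) i 0) = k}).toReal) * M := by
        rw [Finset.sum_mul]
    _ ≤ 1 * M := mul_le_mul_of_nonneg_right hsum_le hMnonneg
    _ = M := one_mul M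

end SUaux2

/-- `FDR(SU(τ)) ≤ ∑_{i=1}^m max_{1 ≤ k ≤ m} F_i(τ_k)/k`. -/
theorem fdr_su_le_sum_max
    {Ω : Type*} [MeasurableSpace Ω] (P : Measure Ω) [IsProbabilityMeasure P]
    (m : ℕ) (hm : 1 ≤ m)
    (p : Fin m → Ω → ℝ) (hmeas : ∀ i, Measurable (p i))
    (hp01 : ∀ i ω, p i ω ∈ Set.Icc (0 : ℝ) 1)
    (hindep : iIndepFun p P)
    (H0 : Finset (Fin m))
    (F : Fin m → ℝ → ℝ)
    (hFmono : ∀ i, MonotoneOn (F i) (Set.Icc 0 1))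
    (hFrange : ∀ i, ∀ t ∈ Set.Icc (0 : ℝ) 1, F i t ∈ Set.Icc (0 : ℝ) 1)
    (hF0 : ∀ i, F i 0 = 0) (hF1 : ∀ i, F i 1 = 1)
    (hnull : ∀ i ∈ H0, ∀ t ∈ Set.Icc (0 : ℝ) 1,
      P {ω | p i ω ≤ t} ≤ ENNReal.ofReal (F i t))
    (τ : ℕ → ℝ) (hτ0 : τ 0 = 0)
    (hτmono : ∀ k l, k ≤ l → l ≤ m → τ k ≤ τ l)
    (hτ01 : ∀ k ≤ m, τ k ∈ Set.Icc (0 : ℝ) 1)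
    :
    ∫ ω, FDP m H0 (rejSU m τ (fun j => p j ω)) ∂P
      ≤ ∑ i : Fin m, (Finset.Icc 1 m).sup' (Finset.nonempty_Icc.mpr hm)
          (fun k => F i (τ k) / (k : ℝ)) := by
  classical
  have hτnonneg : ∀ k ≤ m, 0 ≤ τ k := fun k hk => (hτ01 k hk).1
  have hτ1 : 0 ≤ τ 1 := hτnonneg 1 hm
  have hFDP : ∀ ω, FDP m H0 (rejSU m τ (fun j => p j ω)) =
      ∑ i ∈ H0, (if p i ω ≤ τ (numRejSU m τ (Function.update (fun j => p j ω) i 0))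
        then ((numRejSU m τ (Function.update (fun j => p j ω) i 0) : ℝ))⁻¹ else 0) := fun ω =>
    SUaux.fdp_eq hm hτmono hτnonneg H0 (fun j => (hp01 j ω).1)
  calc ∫ ω, FDP m H0 (rejSU m τ (fun j => p j ω)) ∂P
      = ∫ ω, ∑ i ∈ H0, (if p i ω ≤ τ (numRejSU m τ (Function.update (fun j => p j ω) i 0))
          then ((numRejSU m τ (Function.update (fun j => p j ω) i 0) : ℝ))⁻¹ else 0) ∂P :=
        integral_congr_ae (Filter.Eventually.of_forall hFDP)
    _ = ∑ i ∈ H0, ∫ ω, (if p i ω ≤ τ (numRejSU m τ (Function.update (fun j => p j ω) i 0))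
          then ((numRejSU m τ (Function.update (fun j => p j ω) i 0) : ℝ))⁻¹ else 0) ∂P :=
        integral_finset_sum _ (fun i _ => integrable_term hm τ hτ1 p hmeas i)
    _ ≤ ∑ i ∈ H0, (Finset.Icc 1 m).sup' (Finset.nonempty_Icc.mpr hm)
          (fun k => F i (τ k) / (k : ℝ)) :=
        Finset.sum_le_sum (fun i hi =>
          integral_term_le P hm τ hτ01 p hmeas hindep i (F i) (hFrange i) (hnull i hi))
    _ ≤ ∑ i : Fin m, (Finset.Icc 1 m).sup' (Finset.nonempty_Icc.mpr hm)
          (fun k => F i (τ k) / (k : ℝ)) := by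
        refine Finset.sum_le_sum_of_subset_of_nonneg (Finset.subset_univ H0) (fun i _ _ => ?_)
        refine le_trans (div_nonneg (hFrange i (τ 1) (hτ01 1 hm)).1 (by norm_num : (0:ℝ) ≤ ((1:ℕ):ℝ))) ?_
        exact Finset.le_sup' (fun k : ℕ => F i (τ k) / (k:ℝ)) (Finset.mem_Icc.mpr ⟨le_refl 1, hm⟩)
end

section
/- For any nondecreasing sequence of critical values τ = (τ_1, …, τ_m) ∈ [0,1]^m such that F_i(τ_m) < 1 for all i, the false discovery rate of the step-up procedure SU(τ) satisfies FDR(SU(τ)) ≤ max_{1 ≤ k ≤ m} max over subsets S ⊆ {1,…,m} with |S| = m−k+1 of (1/k) · Σ_{i∈S} F_i(τ_k)/(1 − F_i(τ_m)). -/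
open MeasureTheory ProbabilityTheory Finset

section Det

variable {m : ℕ} {τ : ℕ → ℝ}

/-- count of p-values below `τ k` -/
noncomputable def Nc (m : ℕ) (τ : ℕ → ℝ) (q : Fin m → ℝ) (k : ℕ) : ℕ :=
  (univ.filter (fun j => q j ≤ τ k)).card

lemma numRejSU_eq (q : Fin m → ℝ) :
    numRejSU m τ q = sSup {k | k ≤ m ∧ k ≤ Nc m τ q k} := rfl

lemma su_bdd (q : Fin m → ℝ) : BddAbove {k | k ≤ m ∧ k ≤ Nc m τ q k} :=
  ⟨m, fun _ hk => hk.1⟩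

lemma su_mem (q : Fin m → ℝ) :
    numRejSU m τ q ∈ {k | k ≤ m ∧ k ≤ Nc m τ q k} := by
  rw [numRejSU_eq]
  exact Nat.sSup_mem ⟨0, Nat.zero_le _, Nat.zero_le _⟩ (su_bdd q)

lemma su_le_m (q : Fin m → ℝ) : numRejSU m τ q ≤ m := (su_mem q).1

lemma le_su (q : Fin m → ℝ) {k : ℕ} (h1 : k ≤ m) (h2 : k ≤ Nc m τ q k) :
    k ≤ numRejSU m τ q := le_csSup (su_bdd q) ⟨h1, h2⟩

lemma su_lt (q : Fin m → ℝ) {k : ℕ} (hk : numRejSU m τ q < k) (hkm : k ≤ m) :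
    Nc m τ q k < k := by
  by_contra h
  exact absurd (le_su q hkm (le_of_not_gt h)) (not_le.2 hk)

lemma Nc_mono (hτmono : ∀ k l, k ≤ l → l ≤ m → τ k ≤ τ l) (q : Fin m → ℝ)
    {k l : ℕ} (hkl : k ≤ l) (hlm : l ≤ m) : Nc m τ q k ≤ Nc m τ q l := by
  apply card_le_card
  intro j hj
  rw [mem_filter] at *
  exact ⟨hj.1, le_trans hj.2 (hτmono k l hkl hlm)⟩

lemma Nc_card_filter (q : Fin m → ℝ) (k : ℕ) :
    Nc m τ q k = ∑ j, if q j ≤ τ k then 1 else 0 := by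
  simp only [Nc, Finset.card_filter]

/-- updating coordinate `i` to `0`: counts. -/
lemma Nc_update (hτ0 : τ 0 = 0) (hτmono : ∀ k l, k ≤ l → l ≤ m → τ k ≤ τ l)
    (q : Fin m → ℝ) (i : Fin m) {l : ℕ} (hl : l ≤ m) :
    Nc m τ (Function.update q i 0) l = (if q i ≤ τ l then Nc m τ q l else Nc m τ q l + 1) := by
  have hτl : (0:ℝ) ≤ τ l := hτ0 ▸ hτmono 0 l (Nat.zero_le _) hl
  have key : ∀ r : Fin m → ℝ, Nc m τ r l
      = (∑ j ∈ univ.erase i, if r j ≤ τ l then 1 else 0) + (if r i ≤ τ l then 1 else 0) := by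
    intro r
    rw [Nc_card_filter, ← Finset.sum_erase_add _ _ (mem_univ i)]
  rw [key, key]
  have h1 : (∑ j ∈ univ.erase i, if Function.update q i 0 j ≤ τ l then 1 else 0)
      = ∑ j ∈ univ.erase i, if q j ≤ τ l then 1 else 0 := by
    apply Finset.sum_congr rfl
    intro j hj
    rw [Function.update_of_ne (Finset.ne_of_mem_erase hj)]
  rw [h1, Function.update_self]
  by_cases h : q i ≤ τ l <;> simp [h, hτl]

lemma numRejSU_congr {q1 q2 : Fin m → ℝ} (h : ∀ l ≤ m, Nc m τ q1 l = Nc m τ q2 l) :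
    numRejSU m τ q1 = numRejSU m τ q2 := by
  rw [numRejSU_eq, numRejSU_eq]
  congr 1
  ext k
  simp only [Set.mem_setOf_eq]
  constructor
  · rintro ⟨h1, h2⟩; exact ⟨h1, (h k h1) ▸ h2⟩
  · rintro ⟨h1, h2⟩; exact ⟨h1, (h k h1).symm ▸ h2⟩

/-- card of rejection set equals numRejSU -/
lemma card_rejSU (hτmono : ∀ k l, k ≤ l → l ≤ m → τ k ≤ τ l) (q : Fin m → ℝ) :
    (rejSU m τ q).card = numRejSU m τ q := by
  set K := numRejSU m τ q with hK
  have h1 : (rejSU m τ q).card = Nc m τ q K := rfl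
  have h2 : K ≤ Nc m τ q K := (su_mem q).2
  have hKm : K ≤ m := su_le_m q
  rcases eq_or_lt_of_le hKm with he | hlt
  · have : Nc m τ q K ≤ m := card_le_card (filter_subset _ _) |>.trans (by simp)
    omega
  · have h3 : Nc m τ q (K+1) < K + 1 := su_lt q (Nat.lt_succ_self K) hlt
    have h4 : Nc m τ q K ≤ Nc m τ q (K+1) := Nc_mono hτmono q (Nat.le_succ K) hlt
    omega

lemma rejSU_empty (hτ0 : τ 0 = 0) (hτmono : ∀ k l, k ≤ l → l ≤ m → τ k ≤ τ l)
    (hm : 1 ≤ m) (q : Fin m → ℝ) (h : numRejSU m τ q = 0) : rejSU m τ q = ∅ := by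
  ext i
  simp only [rejSU, mem_filter, mem_univ, true_and, notMem_empty, iff_false]
  intro hqi
  rw [h, hτ0] at hqi
  have : 1 ≤ Nc m τ q 1 := by
    rw [Nc]
    refine Finset.card_pos.2 ⟨i, ?_⟩
    simp only [mem_filter, mem_univ, true_and]
    exact le_trans hqi (hτ0 ▸ hτmono 0 1 (Nat.zero_le _) hm)
  have := le_su q hm this
  omega

/-- the key switching lemma -/
lemma su_switch (hτ0 : τ 0 = 0) (hτmono : ∀ k l, k ≤ l → l ≤ m → τ k ≤ τ l)
    (q : Fin m → ℝ) (i : Fin m) {k : ℕ} (hk1 : 1 ≤ k) (hkm : k ≤ m) :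
    (q i ≤ τ (numRejSU m τ q) ∧ numRejSU m τ q = k)
      ↔ (q i ≤ τ k ∧ numRejSU m τ (Function.update q i 0) = k) := by
  set q' := Function.update q i 0 with hq'
  constructor
  · rintro ⟨hqi, hKk⟩
    rw [hKk] at hqi
    refine ⟨hqi, ?_⟩
    -- counts agree from k on; below they may increase by 1
    have hlow : k ≤ Nc m τ q' k := by
      rw [Nc_update hτ0 hτmono q i hkm, if_pos hqi]
      have := (su_mem (τ := τ) q).2; rw [hKk] at this; exact this
    have hle : k ≤ numRejSU m τ q' := le_su q' hkm hlow
    rcases eq_or_lt_of_le hle with he | hlt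
    · exact he.symm
    · exfalso
      set K' := numRejSU m τ q' with hK'
      have hK'm : K' ≤ m := su_le_m q'
      have h2 : K' ≤ Nc m τ q' K' := (su_mem (τ := τ) q').2
      have hqiK' : q i ≤ τ K' := le_trans hqi (hτmono k K' (le_of_lt hlt) hK'm)
      have h3 : Nc m τ q' K' = Nc m τ q K' := by
        rw [Nc_update hτ0 hτmono q i hK'm, if_pos hqiK']
      have h4 : Nc m τ q K' < K' := su_lt q (hKk ▸ hlt) hK'm
      omega
  · rintro ⟨hqi, hK'k⟩
    have hNk : Nc m τ q k = Nc m τ q' k := by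
      rw [Nc_update hτ0 hτmono q i hkm, if_pos hqi]
    have h2 : k ≤ Nc m τ q' k := hK'k ▸ (su_mem q').2
    have hle : k ≤ numRejSU m τ q := le_su q hkm (hNk ▸ h2)
    rcases eq_or_lt_of_le hle with he | hlt
    · exact ⟨he ▸ hqi, he.symm⟩
    · exfalso
      set K := numRejSU m τ q with hK
      have hKm : K ≤ m := su_le_m q
      have h3 : K ≤ Nc m τ q K := (su_mem q).2
      have h4 : Nc m τ q K ≤ Nc m τ q' K := by
        rw [Nc_update hτ0 hτmono q i hKm]
        split <;> omega
      have h5 : Nc m τ q' K < K := su_lt q' (hK'k ▸ hlt) hKm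
      omega

lemma su_update_ge_one (hτ0 : τ 0 = 0) (hτmono : ∀ k l, k ≤ l → l ≤ m → τ k ≤ τ l)
    (hm : 1 ≤ m) (q : Fin m → ℝ) (i : Fin m) :
    1 ≤ numRejSU m τ (Function.update q i 0) := by
  apply le_su _ hm
  rw [Nc]
  refine Finset.card_pos.2 ⟨i, ?_⟩
  simp only [mem_filter, mem_univ, true_and, Function.update_self]
  exact hτ0 ▸ hτmono 0 1 (Nat.zero_le _) hm

lemma Nc_update_of_big (hτ0 : τ 0 = 0) (hτmono : ∀ k l, k ≤ l → l ≤ m → τ k ≤ τ l)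
    (q : Fin m → ℝ) (i : Fin m) (hbig : τ m < q i) {l : ℕ} (hl : l ≤ m) :
    Nc m τ (Function.update q i 0) l = Nc m τ q l + 1 := by
  rw [Nc_update hτ0 hτmono q i hl, if_neg]
  push_neg
  exact lt_of_le_of_lt (hτmono l m hl le_rfl) hbig

lemma su_update_common (hτ0 : τ 0 = 0) (hτmono : ∀ k l, k ≤ l → l ≤ m → τ k ≤ τ l)
    (q : Fin m → ℝ) {i j : Fin m} (hi : τ m < q i) (hj : τ m < q j) :
    numRejSU m τ (Function.update q i 0) = numRejSU m τ (Function.update q j 0) := by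
  apply numRejSU_congr
  intro l hl
  rw [Nc_update_of_big hτ0 hτmono q i hi hl, Nc_update_of_big hτ0 hτmono q j hj hl]

lemma su_update_count_big (hτ0 : τ 0 = 0) (hτmono : ∀ k l, k ≤ l → l ≤ m → τ k ≤ τ l)
    (q : Fin m → ℝ) {i : Fin m} (hi : τ m < q i) :
    (univ.filter (fun j => τ m < q j)).card ≤ m - numRejSU m τ (Function.update q i 0) + 1 := by
  set κ := numRejSU m τ (Function.update q i 0) with hκ
  have hκm : κ ≤ m := su_le_m _
  have h1 : κ ≤ Nc m τ (Function.update q i 0) κ := (su_mem _).2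
  rw [Nc_update_of_big hτ0 hτmono q i hi hκm] at h1
  -- so Nc q κ ≥ κ - 1
  have hsub : (univ.filter (fun j => τ m < q j)) ⊆ (univ.filter (fun j => q j ≤ τ κ))ᶜ := by
    intro j hj
    have hj' : τ m < q j := (mem_filter.1 hj).2
    rw [Finset.mem_compl, mem_filter, not_and, not_le]
    exact fun _ => lt_of_le_of_lt (hτmono κ m hκm le_rfl) hj'
  have h2 := card_le_card hsub
  rw [Finset.card_compl] at h2
  simp only [Fintype.card_fin] at h2
  have h3 : Nc m τ q κ ≤ m := le_trans (card_le_card (filter_subset _ _)) (by simp)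
  have hNc : Nc m τ q κ = (univ.filter (fun j => q j ≤ τ κ)).card := rfl
  omega

end Det

section Formula

variable {m : ℕ} {τ : ℕ → ℝ}

lemma fdp_formula (hτ0 : τ 0 = 0) (hτmono : ∀ k l, k ≤ l → l ≤ m → τ k ≤ τ l)
    (hm : 1 ≤ m) (H0 : Finset (Fin m)) (q : Fin m → ℝ) :
    FDP m H0 (rejSU m τ q) = ∑ i ∈ H0, ∑ k ∈ Finset.Icc 1 m,
      (k : ℝ)⁻¹ * (if q i ≤ τ k ∧ numRejSU m τ (Function.update q i 0) = k then 1 else 0) := by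
  set K := numRejSU m τ q with hK
  rcases Nat.eq_zero_or_pos K with h0 | hpos
  · rw [FDP, rejSU_empty hτ0 hτmono hm q h0]
    simp only [Finset.empty_inter, Finset.card_empty, Nat.cast_zero, zero_div]
    symm
    apply Finset.sum_eq_zero
    intro i _
    apply Finset.sum_eq_zero
    intro k hk
    rw [Finset.mem_Icc] at hk
    rw [if_neg, mul_zero]
    intro hcond
    have := ((su_switch hτ0 hτmono q i hk.1 hk.2).mpr hcond).2
    omega
  · have hKm : K ≤ m := su_le_m q
    have hKIcc : K ∈ Finset.Icc 1 m := Finset.mem_Icc.2 ⟨hpos, hKm⟩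
    have hcard : (rejSU m τ q).card = K := card_rejSU hτmono q
    have hinter : rejSU m τ q ∩ H0 = H0.filter (fun i => q i ≤ τ K) := by
      ext i
      simp only [Finset.mem_inter, rejSU, mem_filter, mem_univ, true_and, ← hK]
      exact and_comm
    rw [FDP, hcard, hinter]
    have hmax : max (K : ℝ) 1 = (K : ℝ) := max_eq_left (by exact_mod_cast hpos)
    rw [hmax, Finset.card_filter]
    push_cast
    rw [Finset.sum_div]
    apply Finset.sum_congr rfl
    intro i _
    by_cases hi : q i ≤ τ K
    · rw [if_pos hi]
      rw [Finset.sum_eq_single_of_mem K hKIcc]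
      · rw [if_pos ((su_switch hτ0 hτmono q i hpos hKm).mp ⟨hi, rfl⟩), mul_one, one_div]
      · intro k hk hne
        rw [Finset.mem_Icc] at hk
        rw [if_neg, mul_zero]
        intro hcond
        exact hne (((su_switch hτ0 hτmono q i hk.1 hk.2).mpr hcond).2.symm ▸ rfl)
    · rw [if_neg hi, zero_div]
      symm
      apply Finset.sum_eq_zero
      intro k hk
      rw [Finset.mem_Icc] at hk
      rw [if_neg, mul_zero]
      intro hcond
      obtain ⟨h1, h2⟩ := (su_switch hτ0 hτmono q i hk.1 hk.2).mpr hcond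
      exact hi h1

/-- the bound set is bounded above and contains a nonnegative element -/
lemma bdd_set (m : ℕ) (c : Fin m → ℕ → ℝ) :
    BddAbove {x : ℝ | ∃ k, 1 ≤ k ∧ k ≤ m ∧ ∃ S : Finset (Fin m),
        S.card = m - k + 1 ∧ x = (1 / (k : ℝ)) * ∑ i ∈ S, c i k} := by
  apply Set.Finite.bddAbove
  apply Set.Finite.subset (Set.Finite.image
    (fun kS : ℕ × Finset (Fin m) => (1 / (kS.1 : ℝ)) * ∑ i ∈ kS.2, c i kS.1)
    (Set.Finite.prod (Set.finite_Icc 1 m) (Set.finite_univ)))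
  rintro x ⟨k, hk1, hkm, S, _, rfl⟩
  exact ⟨(k, S), ⟨Set.mem_Icc.2 ⟨hk1, hkm⟩, Set.mem_univ _⟩, rfl⟩

lemma pointwise_bound (hτ0 : τ 0 = 0) (hτmono : ∀ k l, k ≤ l → l ≤ m → τ k ≤ τ l)
    (hm : 1 ≤ m) (H0 : Finset (Fin m)) (c : Fin m → ℕ → ℝ) (hc : ∀ i k, k ≤ m → 0 ≤ c i k)
    (q : Fin m → ℝ) :
    ∑ i ∈ H0, ∑ k ∈ Finset.Icc 1 m, ((k : ℝ)⁻¹ * c i k) *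
        (if τ m < q i ∧ numRejSU m τ (Function.update q i 0) = k then 1 else 0)
      ≤ sSup {x : ℝ | ∃ k, 1 ≤ k ∧ k ≤ m ∧ ∃ S : Finset (Fin m),
          S.card = m - k + 1 ∧ x = (1 / (k : ℝ)) * ∑ i ∈ S, c i k} := by
  have hbdd := bdd_set m c
  have hBnd0 : (0:ℝ) ≤ sSup {x : ℝ | ∃ k, 1 ≤ k ∧ k ≤ m ∧ ∃ S : Finset (Fin m),
      S.card = m - k + 1 ∧ x = (1 / (k : ℝ)) * ∑ i ∈ S, c i k} := by
    have hel : (1 / (1 : ℝ)) * ∑ i ∈ (univ : Finset (Fin m)), c i 1 ∈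
        {x : ℝ | ∃ k, 1 ≤ k ∧ k ≤ m ∧ ∃ S : Finset (Fin m),
          S.card = m - k + 1 ∧ x = (1 / (k : ℝ)) * ∑ i ∈ S, c i k} := by
      exact ⟨1, le_rfl, hm, univ, by simp only [Finset.card_univ, Fintype.card_fin]; omega,
        by norm_num⟩
    refine le_trans ?_ (le_csSup hbdd hel)
    exact mul_nonneg (by norm_num) (Finset.sum_nonneg fun i _ => hc i 1 hm)
  -- collapse the inner sums
  have hcollapse : ∀ i ∈ H0, ∑ k ∈ Finset.Icc 1 m, ((k : ℝ)⁻¹ * c i k) *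
        (if τ m < q i ∧ numRejSU m τ (Function.update q i 0) = k then 1 else 0)
      = if τ m < q i then
          ((numRejSU m τ (Function.update q i 0) : ℝ)⁻¹ * c i (numRejSU m τ (Function.update q i 0)))
        else 0 := by
    intro i _
    set κ := numRejSU m τ (Function.update q i 0) with hκ
    have hκ1 : 1 ≤ κ := su_update_ge_one hτ0 hτmono hm q i
    have hκm : κ ≤ m := su_le_m _
    rw [Finset.sum_eq_single_of_mem κ (Finset.mem_Icc.2 ⟨hκ1, hκm⟩)]
    · by_cases hi : τ m < q i
      · rw [if_pos hi, if_pos ⟨hi, rfl⟩, mul_one]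
      · rw [if_neg hi, if_neg (fun h => hi h.1), mul_zero]
    · intro k _ hne
      rw [if_neg (fun h => hne h.2.symm), mul_zero]
  rw [Finset.sum_congr rfl hcollapse]
  rw [← Finset.sum_filter]
  set Tf := H0.filter (fun i => τ m < q i) with hTf
  rcases Finset.eq_empty_or_nonempty Tf with he | ⟨i0, hi0⟩
  · rw [he, Finset.sum_empty]; exact hBnd0
  · have hi0' : τ m < q i0 := (Finset.mem_filter.1 hi0).2
    set κ := numRejSU m τ (Function.update q i0 0) with hκ
    have hκ1 : 1 ≤ κ := su_update_ge_one hτ0 hτmono hm q i0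
    have hκm : κ ≤ m := su_le_m _
    have hcommon : ∀ i ∈ Tf, numRejSU m τ (Function.update q i 0) = κ := by
      intro i hi
      exact su_update_common hτ0 hτmono q (Finset.mem_filter.1 hi).2 hi0'
    have hsum : ∑ i ∈ Tf, ((numRejSU m τ (Function.update q i 0) : ℝ)⁻¹
          * c i (numRejSU m τ (Function.update q i 0)))
        = ∑ i ∈ Tf, ((κ : ℝ)⁻¹ * c i κ) := by
      apply Finset.sum_congr rfl
      intro i hi
      rw [hcommon i hi]
    rw [hsum]
    -- cardinality bound
    have hcardT : Tf.card ≤ m - κ + 1 := by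
      refine le_trans (Finset.card_le_card ?_) (su_update_count_big hτ0 hτmono q hi0')
      intro i hi
      simp only [mem_filter, mem_univ, true_and]
      exact (Finset.mem_filter.1 hi).2
    obtain ⟨S, hTS, hScard⟩ := Finset.exists_superset_card_eq hcardT
      (by simp only [Fintype.card_fin]; omega)
    have hle1 : ∑ i ∈ Tf, ((κ : ℝ)⁻¹ * c i κ) ≤ (1 / (κ:ℝ)) * ∑ i ∈ S, c i κ := by
      rw [one_div, Finset.mul_sum]
      apply Finset.sum_le_sum_of_subset_of_nonneg hTS
      intro i _ _
      exact mul_nonneg (inv_nonneg.2 (Nat.cast_nonneg _)) (hc i κ hκm)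
    refine le_trans hle1 (le_csSup hbdd ?_)
    exact ⟨κ, hκ1, hκm, S, hScard, rfl⟩

end Formula

section Meas

lemma measurable_numRejSU (m : ℕ) (τ : ℕ → ℝ) :
    Measurable (fun q : Fin m → ℝ => numRejSU m τ q) := by
  classical
  have hN : ∀ k, Measurable (fun q : Fin m → ℝ => Nc m τ q k) := by
    intro k
    have he : (fun q : Fin m → ℝ => Nc m τ q k)
        = fun q => ∑ j, if q j ≤ τ k then 1 else 0 := by
      funext q; exact Nc_card_filter q k
    rw [he]
    apply Finset.measurable_sum
    intro j _
    exact Measurable.ite (measurableSet_le (measurable_pi_apply j) measurable_const)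
      measurable_const measurable_const
  set ν : (Fin m → ℝ) → (Fin (m+1) → ℕ) := fun q l => Nc m τ q l with hν
  have hνm : Measurable ν := measurable_pi_lambda _ (fun l => hN l)
  set ψ : (Fin (m+1) → ℕ) → ℕ := fun n =>
    sSup {k | k ≤ m ∧ k ≤ n ⟨k % (m+1), Nat.mod_lt _ (Nat.succ_pos m)⟩} with hψ
  have heq : (fun q : Fin m → ℝ => numRejSU m τ q) = ψ ∘ ν := by
    funext q
    simp only [Function.comp_apply, hψ, hν, numRejSU_eq]
    congr 1
    ext k
    simp only [Set.mem_setOf_eq]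
    constructor
    · rintro ⟨h1, h2⟩
      refine ⟨h1, ?_⟩
      have hk : k % (m+1) = k := Nat.mod_eq_of_lt (by omega)
      simpa [hk] using h2
    · rintro ⟨h1, h2⟩
      have hk : k % (m+1) = k := Nat.mod_eq_of_lt (by omega)
      refine ⟨h1, ?_⟩
      simpa [hk] using h2
  rw [heq]
  exact Measurable.comp Measurable.of_discrete hνm

lemma measurable_update_zero (m : ℕ) {Ω : Type*} [MeasurableSpace Ω]
    (p : Fin m → Ω → ℝ) (hmeas : ∀ i, Measurable (p i)) (i : Fin m) :
    Measurable (fun ω => Function.update (fun j => p j ω) i 0) := by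
  apply measurable_pi_lambda
  intro j
  by_cases h : j = i
  · subst h
    simp only [Function.update_self]
    exact measurable_const
  · simp only [Function.update_of_ne h]
    exact hmeas j

lemma indep_pi_kappa {Ω : Type*} [MeasurableSpace Ω] (P : Measure Ω) [IsProbabilityMeasure P]
    (m : ℕ) (τ : ℕ → ℝ) (p : Fin m → Ω → ℝ) (hmeas : ∀ i, Measurable (p i))
    (hindep : iIndepFun p P) (i : Fin m) :
    IndepFun (p i) (fun ω => numRejSU m τ (Function.update (fun j => p j ω) i 0)) P := by
  classical
  have hbase := hindep.indepFun_finset {i} ({i}ᶜ) disjoint_compl_right hmeas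
  let φ1 : ({x // x ∈ ({i} : Finset (Fin m))} → ℝ) → ℝ :=
    fun v => v ⟨i, Finset.mem_singleton_self i⟩
  have hφ1 : Measurable φ1 := measurable_pi_apply _
  let e : ({x // x ∈ (({i} : Finset (Fin m))ᶜ)} → ℝ) → (Fin m → ℝ) :=
    fun y j => if h : j = i then 0 else y ⟨j, by simp [Finset.mem_compl, h]⟩
  have he : Measurable e := by
    apply measurable_pi_lambda
    intro j
    by_cases h : j = i
    · simp only [e, dif_pos h]
      exact measurable_const
    · simp only [e, dif_neg h]
      exact measurable_pi_apply _
  let φ2 : ({x // x ∈ (({i} : Finset (Fin m))ᶜ)} → ℝ) → ℕ :=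
    fun y => numRejSU m τ (e y)
  have hφ2 : Measurable φ2 := (measurable_numRejSU m τ).comp he
  have hcomp := hbase.comp hφ1 hφ2
  have h1 : (φ1 ∘ fun a (x : ({i} : Finset (Fin m))) => p x a) = p i := by
    funext ω; rfl
  have h2 : (φ2 ∘ fun a (x : (({i} : Finset (Fin m))ᶜ : Finset (Fin m))) => p x a)
      = fun ω => numRejSU m τ (Function.update (fun j => p j ω) i 0) := by
    funext ω
    simp only [Function.comp_apply, φ2]
    congr 1
    funext j
    by_cases h : j = i
    · subst h
      simp only [e, dif_pos rfl, Function.update_self]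
    · simp only [e, dif_neg h, Function.update_of_ne h]
  rwa [h1, h2] at hcomp

end Meas

/-- adaptive FDR bound for the step-up procedure. -/
theorem fdr_su_le_adaptive_bound
    {Ω : Type*} [MeasurableSpace Ω] (P : Measure Ω) [IsProbabilityMeasure P]
    (m : ℕ) (hm : 1 ≤ m)
    (p : Fin m → Ω → ℝ) (hmeas : ∀ i, Measurable (p i))
    (hp01 : ∀ i ω, p i ω ∈ Set.Icc (0 : ℝ) 1)
    (hindep : iIndepFun p P)
    (H0 : Finset (Fin m))
    (F : Fin m → ℝ → ℝ)
    (hFmono : ∀ i, MonotoneOn (F i) (Set.Icc 0 1))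
    (hFrange : ∀ i, ∀ t ∈ Set.Icc (0 : ℝ) 1, F i t ∈ Set.Icc (0 : ℝ) 1)
    (hF0 : ∀ i, F i 0 = 0) (hF1 : ∀ i, F i 1 = 1)
    (hnull : ∀ i ∈ H0, ∀ t ∈ Set.Icc (0 : ℝ) 1,
      P {ω | p i ω ≤ t} ≤ ENNReal.ofReal (F i t))
    (τ : ℕ → ℝ) (hτ0 : τ 0 = 0)
    (hτmono : ∀ k l, k ≤ l → l ≤ m → τ k ≤ τ l)
    (hτ01 : ∀ k ≤ m, τ k ∈ Set.Icc (0 : ℝ) 1)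
    (hFτm : ∀ i, F i (τ m) < 1) :
    ∫ ω, FDP m H0 (rejSU m τ (fun j => p j ω)) ∂P
      ≤ sSup {x : ℝ | ∃ k, 1 ≤ k ∧ k ≤ m ∧ ∃ S : Finset (Fin m),
          S.card = m - k + 1 ∧
          x = (1 / (k : ℝ)) * ∑ i ∈ S, F i (τ k) / (1 - F i (τ m))} := by
  classical
  have hτm01 : τ m ∈ Set.Icc (0:ℝ) 1 := hτ01 m le_rfl
  set c : Fin m → ℕ → ℝ := fun i k => F i (τ k) / (1 - F i (τ m)) with hcdef
  have hden : ∀ i, 0 < 1 - F i (τ m) := fun i => by have := hFτm i; linarith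
  have hFnn : ∀ k, k ≤ m → ∀ i, 0 ≤ F i (τ k) := fun k hk i => (hFrange i (τ k) (hτ01 k hk)).1
  have hcnn : ∀ i k, k ≤ m → 0 ≤ c i k :=
    fun i k hk => div_nonneg (hFnn k hk i) (le_of_lt (hden i))
  set κf : Fin m → Ω → ℕ :=
    fun i ω => numRejSU m τ (Function.update (fun j => p j ω) i 0) with hκf
  have hκmeas : ∀ i, Measurable (κf i) :=
    fun i => (measurable_numRejSU m τ).comp (measurable_update_zero m p hmeas i)
  set A : Fin m → ℕ → Set Ω := fun i k => {ω | p i ω ≤ τ k} with hA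
  set D : Fin m → Set Ω := fun i => {ω | τ m < p i ω} with hD
  set Bv : Fin m → ℕ → Set Ω := fun i k => {ω | κf i ω = k} with hBv
  have hAmeas : ∀ i k, MeasurableSet (A i k) :=
    fun i k => measurableSet_le (hmeas i) measurable_const
  have hDmeas : ∀ i, MeasurableSet (D i) :=
    fun i => measurableSet_lt measurable_const (hmeas i)
  have hBmeas : ∀ i k, MeasurableSet (Bv i k) :=
    fun i k => (hκmeas i) (measurableSet_singleton k)
  have hindep' : ∀ i, IndepFun (p i) (κf i) P :=
    fun i => indep_pi_kappa P m τ p hmeas hindep i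
  have hPAB : ∀ i k, P (A i k ∩ Bv i k) = P (A i k) * P (Bv i k) := by
    intro i k
    exact (hindep' i).measure_inter_preimage_eq_mul (Set.Iic (τ k)) {k}
      measurableSet_Iic (measurableSet_singleton k)
  have hPDB : ∀ i k, P (D i ∩ Bv i k) = P (D i) * P (Bv i k) := by
    intro i k
    exact (hindep' i).measure_inter_preimage_eq_mul (Set.Ioi (τ m)) {k}
      measurableSet_Ioi (measurableSet_singleton k)
  have hDlb : ∀ i ∈ H0, ENNReal.ofReal (1 - F i (τ m)) ≤ P (D i) := by
    intro i hi
    have hcompl : D i = (A i m)ᶜ := by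
      ext ω; simp [hA, hD, not_le]
    rw [hcompl, prob_compl_eq_one_sub (hAmeas i m),
      ENNReal.ofReal_sub 1 (hFnn m le_rfl i), ENNReal.ofReal_one]
    exact tsub_le_tsub_left (hnull i hi (τ m) hτm01) 1
  have hkey : ∀ i ∈ H0, ∀ k, 1 ≤ k → k ≤ m →
      P (A i k ∩ Bv i k) ≤ ENNReal.ofReal (c i k) * P (D i ∩ Bv i k) := by
    intro i hi k hk1 hkm
    rw [hPAB i k, hPDB i k, ← mul_assoc]
    refine mul_le_mul' ?_ le_rfl
    calc P (A i k) ≤ ENNReal.ofReal (F i (τ k)) := hnull i hi (τ k) (hτ01 k hkm)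
      _ = ENNReal.ofReal (c i k * (1 - F i (τ m))) := by
          rw [hcdef]
          simp only []
          rw [div_mul_cancel₀ _ (ne_of_gt (hden i))]
      _ = ENNReal.ofReal (c i k) * ENNReal.ofReal (1 - F i (τ m)) :=
          ENNReal.ofReal_mul (hcnn i k hkm)
      _ ≤ ENNReal.ofReal (c i k) * P (D i) := mul_le_mul' le_rfl (hDlb i hi)
  have hterm : ∀ i ∈ H0, ∀ k, 1 ≤ k → k ≤ m →
      (k:ℝ)⁻¹ * (P (A i k ∩ Bv i k)).toReal
        ≤ ((k:ℝ)⁻¹ * c i k) * (P (D i ∩ Bv i k)).toReal := by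
    intro i hi k hk1 hkm
    have h1 := ENNReal.toReal_mono
      (ENNReal.mul_ne_top ENNReal.ofReal_ne_top (measure_ne_top P _))
      (hkey i hi k hk1 hkm)
    rw [ENNReal.toReal_mul, ENNReal.toReal_ofReal (hcnn i k hkm)] at h1
    calc (k:ℝ)⁻¹ * (P (A i k ∩ Bv i k)).toReal
        ≤ (k:ℝ)⁻¹ * (c i k * (P (D i ∩ Bv i k)).toReal) :=
          mul_le_mul_of_nonneg_left h1 (inv_nonneg.2 (Nat.cast_nonneg k))
      _ = ((k:ℝ)⁻¹ * c i k) * (P (D i ∩ Bv i k)).toReal := by ring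
  have hint1 : ∀ i k, Integrable ((A i k ∩ Bv i k).indicator (fun _ => (k:ℝ)⁻¹)) P :=
    fun i k => (integrable_const _).indicator ((hAmeas i k).inter (hBmeas i k))
  have hint2 : ∀ i k, Integrable ((D i ∩ Bv i k).indicator (fun _ => (k:ℝ)⁻¹ * c i k)) P :=
    fun i k => (integrable_const _).indicator ((hDmeas i).inter (hBmeas i k))
  have hFDPpt : ∀ ω, FDP m H0 (rejSU m τ (fun j => p j ω))
      = ∑ i ∈ H0, ∑ k ∈ Finset.Icc 1 m,
          (A i k ∩ Bv i k).indicator (fun _ => (k:ℝ)⁻¹) ω := by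
    intro ω
    rw [fdp_formula hτ0 hτmono hm H0 (fun j => p j ω)]
    refine Finset.sum_congr rfl fun i _ => Finset.sum_congr rfl fun k _ => ?_
    by_cases hmem : ω ∈ A i k ∩ Bv i k
    · rw [Set.indicator_of_mem hmem, if_pos ⟨hmem.1, hmem.2⟩, mul_one]
    · rw [Set.indicator_of_notMem hmem, if_neg (fun h => hmem ⟨h.1, h.2⟩), mul_zero]
  have hl1 : ∫ ω, FDP m H0 (rejSU m τ (fun j => p j ω)) ∂P
      = ∑ i ∈ H0, ∑ k ∈ Finset.Icc 1 m, (k:ℝ)⁻¹ * (P (A i k ∩ Bv i k)).toReal := by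
    rw [integral_congr_ae (Filter.Eventually.of_forall hFDPpt)]
    rw [integral_finset_sum _ (fun i _ => integrable_finset_sum _ (fun k _ => hint1 i k))]
    refine Finset.sum_congr rfl fun i _ => ?_
    rw [integral_finset_sum _ (fun k _ => hint1 i k)]
    refine Finset.sum_congr rfl fun k _ => ?_
    rw [integral_indicator_const _ ((hAmeas i k).inter (hBmeas i k)), smul_eq_mul, mul_comm, measureReal_def]
  have hl2 : ∑ i ∈ H0, ∑ k ∈ Finset.Icc 1 m,
        ((k:ℝ)⁻¹ * c i k) * (P (D i ∩ Bv i k)).toReal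
      = ∫ ω, ∑ i ∈ H0, ∑ k ∈ Finset.Icc 1 m,
          (D i ∩ Bv i k).indicator (fun _ => (k:ℝ)⁻¹ * c i k) ω ∂P := by
    rw [integral_finset_sum _ (fun i _ => integrable_finset_sum _ (fun k _ => hint2 i k))]
    refine Finset.sum_congr rfl fun i _ => ?_
    rw [integral_finset_sum _ (fun k _ => hint2 i k)]
    refine Finset.sum_congr rfl fun k _ => ?_
    rw [integral_indicator_const _ ((hDmeas i).inter (hBmeas i k)), smul_eq_mul, mul_comm, measureReal_def]
  have hpt2 : ∀ ω, ∑ i ∈ H0, ∑ k ∈ Finset.Icc 1 m,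
        (D i ∩ Bv i k).indicator (fun _ => (k:ℝ)⁻¹ * c i k) ω
      ≤ sSup {x : ℝ | ∃ k, 1 ≤ k ∧ k ≤ m ∧ ∃ S : Finset (Fin m),
          S.card = m - k + 1 ∧ x = (1 / (k : ℝ)) * ∑ i ∈ S, c i k} := by
    intro ω
    refine le_trans (le_of_eq ?_) (pointwise_bound hτ0 hτmono hm H0 c hcnn (fun j => p j ω))
    refine Finset.sum_congr rfl fun i _ => Finset.sum_congr rfl fun k _ => ?_
    by_cases hmem : ω ∈ D i ∩ Bv i k
    · rw [Set.indicator_of_mem hmem, if_pos ⟨hmem.1, hmem.2⟩, mul_one]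
    · rw [Set.indicator_of_notMem hmem, if_neg (fun h => hmem ⟨h.1, h.2⟩), mul_zero]
  have hsets : {x : ℝ | ∃ k, 1 ≤ k ∧ k ≤ m ∧ ∃ S : Finset (Fin m),
        S.card = m - k + 1 ∧ x = (1 / (k : ℝ)) * ∑ i ∈ S, F i (τ k) / (1 - F i (τ m))}
      = {x : ℝ | ∃ k, 1 ≤ k ∧ k ≤ m ∧ ∃ S : Finset (Fin m),
        S.card = m - k + 1 ∧ x = (1 / (k : ℝ)) * ∑ i ∈ S, c i k} := by
    simp only [hcdef]
  rw [hsets, hl1]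
  calc ∑ i ∈ H0, ∑ k ∈ Finset.Icc 1 m, (k:ℝ)⁻¹ * (P (A i k ∩ Bv i k)).toReal
      ≤ ∑ i ∈ H0, ∑ k ∈ Finset.Icc 1 m,
          ((k:ℝ)⁻¹ * c i k) * (P (D i ∩ Bv i k)).toReal := by
        refine Finset.sum_le_sum fun i hi => Finset.sum_le_sum fun k hk => ?_
        have hk' := Finset.mem_Icc.1 hk
        exact hterm i hi k hk'.1 hk'.2
    _ = ∫ ω, ∑ i ∈ H0, ∑ k ∈ Finset.Icc 1 m,
          (D i ∩ Bv i k).indicator (fun _ => (k:ℝ)⁻¹ * c i k) ω ∂P := hl2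
    _ ≤ sSup {x : ℝ | ∃ k, 1 ≤ k ∧ k ≤ m ∧ ∃ S : Finset (Fin m),
          S.card = m - k + 1 ∧ x = (1 / (k : ℝ)) * ∑ i ∈ S, c i k} := by
        refine le_trans (integral_mono
          (integrable_finset_sum _ (fun i _ => integrable_finset_sum _ (fun k _ => hint2 i k)))
          (integrable_const _) hpt2) ?_
        rw [integral_const]
        simp
end

section
/- For any nondecreasing sequence of critical values τ = (τ_1, …, τ_m) ∈ [0,1]^m, the false discovery rate of the step-down procedure SD(τ) satisfies FDR(SD(τ)) ≤ Σ_{i=1}^m max_{1 ≤ k ≤ m} F_i(τ_k)/k. -/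
open MeasureTheory ProbabilityTheory Finset

/-- Number of rejections of the step-down procedure with critical values `τ 1, …, τ m`
(convention `τ 0 = 0`). -/
noncomputable def numRejSD (m : ℕ) (τ : ℕ → ℝ) (q : Fin m → ℝ) : ℕ :=
  sSup {k | k ≤ m ∧ ∀ k' ≤ k, k' ≤ (univ.filter (fun j => q j ≤ τ k')).card}

/-- Rejection set of the step-down procedure. -/
noncomputable def rejSD (m : ℕ) (τ : ℕ → ℝ) (q : Fin m → ℝ) : Finset (Fin m) :=
  univ.filter (fun i => q i ≤ τ (numRejSD m τ q))

section AuxDet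

variable (m : ℕ) (τ : ℕ → ℝ) (q : Fin m → ℝ)

lemma SD_bdd : BddAbove {k | k ≤ m ∧ ∀ k' ≤ k, k' ≤ (univ.filter (fun j => q j ≤ τ k')).card} :=
  ⟨m, fun _ hx => hx.1⟩

lemma SD_nonempty : Set.Nonempty {k | k ≤ m ∧ ∀ k' ≤ k, k' ≤ (univ.filter (fun j => q j ≤ τ k')).card} :=
  ⟨0, Nat.zero_le m, fun k' hk' => by omega⟩

lemma numRejSD_mem : numRejSD m τ q ∈
    {k | k ≤ m ∧ ∀ k' ≤ k, k' ≤ (univ.filter (fun j => q j ≤ τ k')).card} :=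
  Nat.sSup_mem (SD_nonempty m τ q) (SD_bdd m τ q)

lemma numRejSD_le : numRejSD m τ q ≤ m := (numRejSD_mem m τ q).1

lemma numRejSD_count : ∀ k' ≤ numRejSD m τ q, k' ≤ (univ.filter (fun j => q j ≤ τ k')).card :=
  (numRejSD_mem m τ q).2

lemma le_numRejSD {k : ℕ} (hk : k ≤ m)
    (h : ∀ k' ≤ k, k' ≤ (univ.filter (fun j => q j ≤ τ k')).card) : k ≤ numRejSD m τ q :=
  le_csSup (SD_bdd m τ q) ⟨hk, h⟩

lemma numRejSD_eq_iff (n : ℕ) : numRejSD m τ q = n ↔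
    (n ≤ m ∧ ∀ k' ≤ n, k' ≤ (univ.filter (fun j => q j ≤ τ k')).card) ∧
    ¬ ((n+1) ≤ m ∧ ∀ k' ≤ n+1, k' ≤ (univ.filter (fun j => q j ≤ τ k')).card) := by
  constructor
  · rintro rfl
    refine ⟨numRejSD_mem m τ q, fun h => ?_⟩
    have := le_numRejSD m τ q h.1 h.2
    omega
  · rintro ⟨h1, h2⟩
    have hle : n ≤ numRejSD m τ q := le_numRejSD m τ q h1.1 h1.2
    by_contra hne
    have hlt : n + 1 ≤ numRejSD m τ q := by omega
    exact h2 ⟨le_trans hlt (numRejSD_le m τ q),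
      fun k' hk' => numRejSD_count m τ q k' (le_trans hk' hlt)⟩

lemma numRejSD_le_card_rejSD : numRejSD m τ q ≤ (rejSD m τ q).card :=
  numRejSD_count m τ q _ le_rfl

lemma one_le_numRejSD (hm : 1 ≤ m)
    (hτmono : ∀ k l, k ≤ l → l ≤ m → τ k ≤ τ l) {i : Fin m}
    (hi : q i ≤ τ (numRejSD m τ q)) : 1 ≤ numRejSD m τ q := by
  rcases Nat.eq_zero_or_pos (numRejSD m τ q) with h0 | h; swap
  · exact h
  refine le_numRejSD m τ q hm (fun k' hk' => ?_)
  interval_cases k'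
  · omega
  · have hq1 : q i ≤ τ 1 := by
      have := hτmono 0 1 (by omega) hm
      rw [h0] at hi; linarith
    calc 1 = ({i} : Finset (Fin m)).card := (card_singleton i).symm
    _ ≤ _ := card_le_card (by simp [hq1])

lemma numRejSD_update (hτmono : ∀ k l, k ≤ l → l ≤ m → τ k ≤ τ l) {i : Fin m}
    (hq0 : 0 ≤ q i) (hqi : q i ≤ τ (numRejSD m τ q)) :
    numRejSD m τ (Function.update q i 0) = numRejSD m τ q := by
  set N := numRejSD m τ q with hN
  set q' := Function.update q i 0 with hq'
  have hmono : ∀ j, q' j ≤ q j := by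
    intro j
    rcases eq_or_ne j i with rfl | hji
    · simp [hq', hq0]
    · simp [hq', Function.update_apply, hji]
  have hge : N ≤ numRejSD m τ q' := by
    refine le_numRejSD m τ q' (numRejSD_le m τ q) (fun k' hk' => ?_)
    refine le_trans (numRejSD_count m τ q k' hk') (card_le_card ?_)
    intro j hj
    simp only [mem_filter, mem_univ, true_and] at hj ⊢
    exact le_trans (hmono j) hj
  have hle : numRejSD m τ q' ≤ N := by
    refine le_numRejSD m τ q (numRejSD_le m τ q') (fun k' hk' => ?_)
    rcases le_or_gt k' N with h | h
    · exact numRejSD_count m τ q k' h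
    · have hqik' : q i ≤ τ k' := le_trans hqi (hτmono N k' h.le (le_trans hk' (numRejSD_le m τ q')))
      refine le_trans (numRejSD_count m τ q' k' hk') (card_le_card ?_)
      intro j hj
      simp only [mem_filter, mem_univ, true_and] at hj ⊢
      rcases eq_or_ne j i with rfl | hji
      · exact hqik'
      · simpa [hq', Function.update_apply, hji] using hj
  omega

lemma FDP_le_sum (H0 : Finset (Fin m)) (hm : 1 ≤ m)
    (hτmono : ∀ k l, k ≤ l → l ≤ m → τ k ≤ τ l) (hq : ∀ i, 0 ≤ q i) :
    FDP m H0 (rejSD m τ q) ≤ ∑ i ∈ H0, ∑ k ∈ range (m+1),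
      if (q i ≤ τ k ∧ numRejSD m τ (Function.update q i 0) = k)
      then ((max (k:ℝ) 1))⁻¹ else 0 := by
  set R := rejSD m τ q with hR
  set N := numRejSD m τ q with hN
  have hcard : ((R ∩ H0).card : ℝ) = ∑ i ∈ H0, if i ∈ R then (1:ℝ) else 0 := by
    have h1 : R ∩ H0 = H0.filter (· ∈ R) := by
      ext j; simp [Finset.mem_inter, Finset.mem_filter, and_comm]
    rw [h1, Finset.card_filter]
    push_cast
    rfl
  rw [FDP, hcard, Finset.sum_div]
  refine Finset.sum_le_sum (fun i hi => ?_)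
  by_cases hiR : i ∈ R
  · have hqi : q i ≤ τ N := by
      have := hiR; rw [hR, rejSD, mem_filter] at this; exact this.2
    have hN1 : 1 ≤ N := one_le_numRejSD m τ q hm hτmono hqi
    have hupd : numRejSD m τ (Function.update q i 0) = N :=
      numRejSD_update m τ q hτmono (hq i) hqi
    have hterm : ((max (N:ℝ) 1))⁻¹ ≤ ∑ k ∈ range (m+1),
        if (q i ≤ τ k ∧ numRejSD m τ (Function.update q i 0) = k)
        then ((max (k:ℝ) 1))⁻¹ else 0 := by
      have hmem : N ∈ range (m+1) := by
        exact mem_range.mpr (Nat.lt_succ_of_le (numRejSD_le m τ q))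
      have := Finset.single_le_sum (f := fun k => if (q i ≤ τ k ∧
          numRejSD m τ (Function.update q i 0) = k) then ((max (k:ℝ) 1))⁻¹ else 0)
        (fun k _ => by positivity) hmem
      simpa [hqi, hupd] using this
    refine le_trans ?_ hterm
    have hNcard : (N : ℝ) ≤ (R.card : ℝ) := by
      exact_mod_cast numRejSD_le_card_rejSD m τ q
    have hmaxN : max (N:ℝ) 1 = (N:ℝ) := max_eq_left (by exact_mod_cast hN1)
    have hmaxR : max ((R.card):ℝ) 1 = ((R.card):ℝ) := max_eq_left (by
      have : (1:ℝ) ≤ (N:ℝ) := by exact_mod_cast hN1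
      linarith)
    rw [hmaxN, hmaxR, if_pos hiR]
    rw [one_div]
    exact inv_anti₀ (by exact_mod_cast hN1) hNcard
  · rw [if_neg hiR, zero_div]
    exact Finset.sum_nonneg (fun k _ => by positivity)

lemma measurable_cnt (c : ℝ) :
    Measurable fun q : Fin m → ℝ => (univ.filter (fun j => q j ≤ c)).card := by
  simp_rw [Finset.card_filter]
  refine Finset.measurable_sum _ (fun j _ => ?_)
  exact Measurable.ite (measurableSet_le (measurable_pi_apply j) measurable_const)
    measurable_const measurable_const

lemma measurableSet_SDcond (n : ℕ) :
    MeasurableSet {q : Fin m → ℝ |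
      n ≤ m ∧ ∀ k' ≤ n, k' ≤ (univ.filter (fun j => q j ≤ τ k')).card} := by
  by_cases hn : n ≤ m
  · have : {q : Fin m → ℝ | n ≤ m ∧ ∀ k' ≤ n, k' ≤ (univ.filter (fun j => q j ≤ τ k')).card}
        = ⋂ k' ∈ Set.Iic n, {q : Fin m → ℝ | k' ≤ (univ.filter (fun j => q j ≤ τ k')).card} := by
      ext q; simp [hn]
    rw [this]
    exact MeasurableSet.biInter (Set.to_countable _)
      (fun k' _ => measurable_cnt m (τ k') measurableSet_Ici)
  · have : {q : Fin m → ℝ | n ≤ m ∧ ∀ k' ≤ n, k' ≤ (univ.filter (fun j => q j ≤ τ k')).card}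
        = ∅ := by ext q; simp [hn]
    rw [this]; exact MeasurableSet.empty

lemma measurable_numRejSD :
    Measurable fun q : Fin m → ℝ => numRejSD m τ q := by
  refine measurable_to_countable' (fun n => ?_)
  have : (fun q : Fin m → ℝ => numRejSD m τ q) ⁻¹' {n} =
      {q : Fin m → ℝ | n ≤ m ∧ ∀ k' ≤ n, k' ≤ (univ.filter (fun j => q j ≤ τ k')).card} ∩
      ({q : Fin m → ℝ | (n+1) ≤ m ∧ ∀ k' ≤ n+1, k' ≤ (univ.filter (fun j => q j ≤ τ k')).card})ᶜ := by
    ext q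
    simp only [Set.mem_preimage, Set.mem_singleton_iff, Set.mem_inter_iff, Set.mem_compl_iff,
      Set.mem_setOf_eq]
    exact numRejSD_eq_iff m τ q n
  rw [this]
  exact (measurableSet_SDcond m τ n).inter (measurableSet_SDcond m τ (n+1)).compl

end AuxDet

section AuxProb

variable {Ω : Type*} [MeasurableSpace Ω] (P : Measure Ω) [IsProbabilityMeasure P]
  (m : ℕ) (τ : ℕ → ℝ) (p : Fin m → Ω → ℝ)

lemma measurable_K (hmeas : ∀ i, Measurable (p i)) (i : Fin m) :
    Measurable (fun ω => numRejSD m τ (Function.update (fun j => p j ω) i 0)) := by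
  refine (measurable_numRejSD m τ).comp ?_
  refine measurable_pi_lambda _ (fun j => ?_)
  have : (fun ω => Function.update (fun j' => p j' ω) i 0 j)
      = fun ω => if j = i then 0 else p j ω := by
    funext ω; simp [Function.update_apply]
  rw [this]
  by_cases hji : j = i
  · simp [hji]
  · simpa [hji] using hmeas j

lemma indep_K (hmeas : ∀ i, Measurable (p i))
    (hindep : iIndepFun p P) (i : Fin m) :
    IndepFun (p i) (fun ω => numRejSD m τ (Function.update (fun j => p j ω) i 0)) P := by
  classical
  have base := hindep.indepFun_finset {i} ({i}ᶜ) disjoint_compl_right hmeas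
  let φ₁ : (({i} : Finset (Fin m)) → ℝ) → ℝ := fun x => x ⟨i, Finset.mem_singleton_self i⟩
  let φ₂ : ((({i}ᶜ : Finset (Fin m)) : Finset (Fin m)) → ℝ) → ℕ := fun x =>
    numRejSD m τ (fun j => if h : j ∈ ({i}ᶜ : Finset (Fin m)) then x ⟨j, h⟩ else 0)
  have hφ₁ : Measurable φ₁ := measurable_pi_apply _
  have hφ₂ : Measurable φ₂ := by
    refine (measurable_numRejSD m τ).comp ?_
    refine measurable_pi_lambda _ (fun j => ?_)
    by_cases h : j ∈ ({i}ᶜ : Finset (Fin m))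
    · simp only [dif_pos h]; exact measurable_pi_apply _
    · simp only [dif_neg h]; exact measurable_const
  have key := base.comp hφ₁ hφ₂
  have e1 : (φ₁ ∘ fun a (j : ({i} : Finset (Fin m))) => p j a) = p i := rfl
  have e2 : (φ₂ ∘ fun a (j : (({i}ᶜ : Finset (Fin m)) : Finset (Fin m))) => p j a)
      = fun ω => numRejSD m τ (Function.update (fun j => p j ω) i 0) := by
    funext ω
    simp only [Function.comp_apply, φ₂]
    congr 1
    funext j
    rcases eq_or_ne j i with rfl | hji
    · simp [Function.update_apply]
    · simp [Function.update_apply, hji]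
  rw [e1, e2] at key
  exact key

end AuxProb

/-- `FDR(SD(τ)) ≤ ∑_{i=1}^m max_{1 ≤ k ≤ m} F_i(τ_k)/k`. -/
theorem fdr_sd_le_sum_max
    {Ω : Type*} [MeasurableSpace Ω] (P : Measure Ω) [IsProbabilityMeasure P]
    (m : ℕ) (hm : 1 ≤ m)
    (p : Fin m → Ω → ℝ) (hmeas : ∀ i, Measurable (p i))
    (hp01 : ∀ i ω, p i ω ∈ Set.Icc (0 : ℝ) 1)
    (hindep : iIndepFun p P)
    (H0 : Finset (Fin m))
    (F : Fin m → ℝ → ℝ)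
    (hFmono : ∀ i, MonotoneOn (F i) (Set.Icc 0 1))
    (hFrange : ∀ i, ∀ t ∈ Set.Icc (0 : ℝ) 1, F i t ∈ Set.Icc (0 : ℝ) 1)
    (hF0 : ∀ i, F i 0 = 0) (hF1 : ∀ i, F i 1 = 1)
    (hnull : ∀ i ∈ H0, ∀ t ∈ Set.Icc (0 : ℝ) 1,
      P {ω | p i ω ≤ t} ≤ ENNReal.ofReal (F i t))
    (τ : ℕ → ℝ) (hτ0 : τ 0 = 0)
    (hτmono : ∀ k l, k ≤ l → l ≤ m → τ k ≤ τ l)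
    (hτ01 : ∀ k ≤ m, τ k ∈ Set.Icc (0 : ℝ) 1)
    :
    ∫ ω, FDP m H0 (rejSD m τ (fun j => p j ω)) ∂P
      ≤ ∑ i : Fin m, (Finset.Icc 1 m).sup' (Finset.nonempty_Icc.mpr hm)
          (fun k => F i (τ k) / (k : ℝ)) := by
  classical
  set K : Fin m → Ω → ℕ := fun i ω => numRejSD m τ (Function.update (fun j => p j ω) i 0) with hK
  have hKmeas : ∀ i, Measurable (K i) := fun i => measurable_K m τ p hmeas i
  set A : Fin m → ℕ → Set Ω := fun i k => (p i) ⁻¹' (Set.Iic (τ k)) ∩ (K i) ⁻¹' {k} with hA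
  have hAmeas : ∀ i k, MeasurableSet (A i k) := fun i k =>
    ((hmeas i) measurableSet_Iic).inter ((hKmeas i) (measurableSet_singleton k))
  have hMnn : ∀ i, (0:ℝ) ≤ (Finset.Icc 1 m).sup' (Finset.nonempty_Icc.mpr hm)
      (fun k => F i (τ k) / (k : ℝ)) := by
    intro i
    have h1 : (1:ℕ) ∈ Finset.Icc 1 m := by simp [hm]
    have := Finset.le_sup' (fun k => F i (τ k) / (k : ℝ)) h1
    have h0 : (0:ℝ) ≤ F i (τ 1) / ((1:ℕ) : ℝ) := by
      simpa using (hFrange i (τ 1) (hτ01 1 hm)).1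
    linarith
  -- step 1 : pointwise bound and monotonicity of integral
  have hint : ∀ i ∈ H0, ∀ k ∈ range (m+1),
      Integrable ((A i k).indicator (fun _ => (max (k:ℝ) 1)⁻¹)) P := by
    intro i _ k _
    exact (integrable_const _).indicator (hAmeas i k)
  have step1 : ∫ ω, FDP m H0 (rejSD m τ (fun j => p j ω)) ∂P
      ≤ ∫ ω, ∑ i ∈ H0, ∑ k ∈ range (m+1),
          (A i k).indicator (fun _ => (max (k:ℝ) 1)⁻¹) ω ∂P := by
    refine integral_mono_of_nonneg (Filter.Eventually.of_forall (fun ω => ?_))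
      (integrable_finset_sum _ (fun i hi => integrable_finset_sum _ (fun k hk => hint i hi k hk)))
      (Filter.Eventually.of_forall (fun ω => ?_))
    · unfold FDP; positivity
    · refine le_trans (FDP_le_sum m τ (fun j => p j ω) H0 hm hτmono (fun i => (hp01 i ω).1)) ?_
      refine le_of_eq (Finset.sum_congr rfl (fun i _ => Finset.sum_congr rfl (fun k _ => ?_)))
      simp only [Set.indicator_apply, hA, Set.mem_inter_iff, Set.mem_preimage, Set.mem_Iic,
        Set.mem_singleton_iff, hK]
  -- step 2 : compute the integral
  have step2 : ∫ ω, ∑ i ∈ H0, ∑ k ∈ range (m+1),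
      (A i k).indicator (fun _ => (max (k:ℝ) 1)⁻¹) ω ∂P
      = ∑ i ∈ H0, ∑ k ∈ range (m+1), (P (A i k)).toReal * (max (k:ℝ) 1)⁻¹ := by
    rw [integral_finset_sum _ (fun i hi => integrable_finset_sum _ (fun k hk => hint i hi k hk))]
    refine Finset.sum_congr rfl (fun i hi => ?_)
    rw [integral_finset_sum _ (fun k hk => hint i hi k hk)]
    refine Finset.sum_congr rfl (fun k hk => ?_)
    rw [integral_indicator_const _ (hAmeas i k), smul_eq_mul, measureReal_def]
  -- step 3 : bound each inner sum
  have step3 : ∀ i ∈ H0, ∑ k ∈ range (m+1), (P (A i k)).toReal * (max (k:ℝ) 1)⁻¹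
      ≤ (Finset.Icc 1 m).sup' (Finset.nonempty_Icc.mpr hm) (fun k => F i (τ k) / (k : ℝ)) := by
    intro i hiH0
    have hprod : ∀ k, P (A i k) = P ((p i) ⁻¹' (Set.Iic (τ k))) * P ((K i) ⁻¹' {k}) := fun k =>
      (indep_K P m τ p hmeas hindep i).measure_inter_preimage_eq_mul _ _
        measurableSet_Iic (measurableSet_singleton k)
    have hsumK : ∑ k ∈ range (m+1), (P ((K i) ⁻¹' {k})).toReal ≤ 1 := by
      have hdisj : Set.PairwiseDisjoint ↑(range (m+1)) (fun k => (K i) ⁻¹' {k}) := by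
        intro a _ b _ hab
        refine Set.disjoint_left.mpr (fun ω h1 h2 => hab ?_)
        simp only [Set.mem_preimage, Set.mem_singleton_iff] at h1 h2
        rw [← h1, ← h2]
      have hle : ∑ k ∈ range (m+1), P ((K i) ⁻¹' {k}) ≤ 1 := by
        rw [← measure_biUnion_finset hdisj (fun k _ => (hKmeas i) (measurableSet_singleton k))]
        exact prob_le_one
      calc ∑ k ∈ range (m+1), (P ((K i) ⁻¹' {k})).toReal
          = (∑ k ∈ range (m+1), P ((K i) ⁻¹' {k})).toReal :=
            (ENNReal.toReal_sum (fun k _ => measure_ne_top P _)).symm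
        _ ≤ (1 : ENNReal).toReal := ENNReal.toReal_mono ENNReal.one_ne_top hle
        _ = 1 := by simp
    calc ∑ k ∈ range (m+1), (P (A i k)).toReal * (max (k:ℝ) 1)⁻¹
        ≤ ∑ k ∈ range (m+1), ((Finset.Icc 1 m).sup' (Finset.nonempty_Icc.mpr hm)
            (fun k => F i (τ k) / (k : ℝ))) * (P ((K i) ⁻¹' {k})).toReal := by
          refine Finset.sum_le_sum (fun k hk => ?_)
          have hkm : k ≤ m := by simpa [Nat.lt_succ_iff] using hk
          have hFk : (P ((p i) ⁻¹' (Set.Iic (τ k)))).toReal ≤ F i (τ k) := by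
            refine ENNReal.toReal_le_of_le_ofReal (hFrange i (τ k) (hτ01 k hkm)).1 ?_
            exact hnull i hiH0 (τ k) (hτ01 k hkm)
          have hFM : F i (τ k) * (max (k:ℝ) 1)⁻¹ ≤ (Finset.Icc 1 m).sup'
              (Finset.nonempty_Icc.mpr hm) (fun k => F i (τ k) / (k : ℝ)) := by
            rcases Nat.eq_zero_or_pos k with rfl | hk1
            · simpa [hτ0, hF0 i] using hMnn i
            · have hmx : max (k:ℝ) 1 = (k:ℝ) := max_eq_left (by exact_mod_cast hk1)
              rw [hmx]
              have := Finset.le_sup' (fun k => F i (τ k) / (k : ℝ)) (mem_Icc.mpr ⟨hk1, hkm⟩)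
              rw [div_eq_mul_inv] at this
              exact this
          rw [hprod k, ENNReal.toReal_mul]
          have hre : (P ((p i) ⁻¹' (Set.Iic (τ k)))).toReal * (P ((K i) ⁻¹' {k})).toReal
              * (max (k:ℝ) 1)⁻¹
              = ((P ((p i) ⁻¹' (Set.Iic (τ k)))).toReal * (max (k:ℝ) 1)⁻¹)
                * (P ((K i) ⁻¹' {k})).toReal := by ring
          rw [hre]
          refine mul_le_mul_of_nonneg_right ?_ ENNReal.toReal_nonneg
          refine le_trans (mul_le_mul_of_nonneg_right hFk (by positivity)) hFM
      _ = ((Finset.Icc 1 m).sup' (Finset.nonempty_Icc.mpr hm)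
            (fun k => F i (τ k) / (k : ℝ))) * ∑ k ∈ range (m+1), (P ((K i) ⁻¹' {k})).toReal := by
          rw [Finset.mul_sum]
      _ ≤ ((Finset.Icc 1 m).sup' (Finset.nonempty_Icc.mpr hm)
            (fun k => F i (τ k) / (k : ℝ))) * 1 :=
          mul_le_mul_of_nonneg_left hsumK (hMnn i)
      _ = _ := mul_one _
  calc ∫ ω, FDP m H0 (rejSD m τ (fun j => p j ω)) ∂P
      ≤ ∑ i ∈ H0, ∑ k ∈ range (m+1), (P (A i k)).toReal * (max (k:ℝ) 1)⁻¹ :=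
        step1.trans (le_of_eq step2)
    _ ≤ ∑ i ∈ H0, (Finset.Icc 1 m).sup' (Finset.nonempty_Icc.mpr hm)
          (fun k => F i (τ k) / (k : ℝ)) := Finset.sum_le_sum step3
    _ ≤ ∑ i : Fin m, (Finset.Icc 1 m).sup' (Finset.nonempty_Icc.mpr hm)
          (fun k => F i (τ k) / (k : ℝ)) :=
        Finset.sum_le_sum_of_subset_of_nonneg (Finset.subset_univ H0) (fun i _ _ => hMnn i)
end

section
/- Assume additionally that the null p-values are super-uniform, i.e. P(p_i ≤ t) ≤ t for all t ∈ [0,1] and all i ∈ H_0. Then for any nondecreasing sequence of critical values τ = (τ_1, …, τ_m) ∈ [0,1]^m, the false discovery rate of the step-up procedure SU(τ) satisfies FDR(SU(τ)) ≤ m · max_{1 ≤ k ≤ m} τ_k/k. In particular, the Benjamini–Hochberg procedure, given by τ_k = αk/m for α ∈ (0,1), satisfies FDR ≤ α. -/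
open MeasureTheory ProbabilityTheory Finset

namespace FDRaux

variable {m : ℕ} {τ : ℕ → ℝ}

noncomputable def cnt (m : ℕ) (τ : ℕ → ℝ) (k : ℕ) (q : Fin m → ℝ) : ℕ :=
  (univ.filter (fun j => q j ≤ τ k)).card

lemma cnt_le (k : ℕ) (q : Fin m → ℝ) : cnt m τ k q ≤ m := by
  simpa [cnt] using (Finset.card_filter_le univ (fun j => q j ≤ τ k)).trans
    (le_of_eq (by simp))

def S (m : ℕ) (τ : ℕ → ℝ) (q : Fin m → ℝ) : Set ℕ :=
  {k | k ≤ m ∧ k ≤ cnt m τ k q}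

lemma numRej_eq (q : Fin m → ℝ) : numRejSU m τ q = sSup (S m τ q) := rfl

lemma S_bdd (q : Fin m → ℝ) : BddAbove (S m τ q) := ⟨m, fun k hk => hk.1⟩

lemma S_zero (q : Fin m → ℝ) : 0 ∈ S m τ q := ⟨Nat.zero_le m, Nat.zero_le _⟩

lemma numRej_mem (q : Fin m → ℝ) : numRejSU m τ q ∈ S m τ q := by
  rw [numRej_eq]; exact Nat.sSup_mem ⟨0, S_zero q⟩ (S_bdd q)

lemma numRej_le_m (q : Fin m → ℝ) : numRejSU m τ q ≤ m := (numRej_mem q).1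

lemma le_numRej {k : ℕ} {q : Fin m → ℝ} (hk : k ∈ S m τ q) : k ≤ numRejSU m τ q :=
  le_csSup (S_bdd q) hk

lemma sSup_eq_iff' {T : Set ℕ} (h0 : 0 ∈ T) (hb : BddAbove T) {n : ℕ} :
    sSup T = n ↔ n ∈ T ∧ ∀ k ∈ T, k ≤ n := by
  constructor
  · rintro rfl
    exact ⟨Nat.sSup_mem ⟨0, h0⟩ hb, fun k hk => le_csSup hb hk⟩
  · rintro ⟨h1, h2⟩
    exact le_antisymm (csSup_le ⟨0, h0⟩ h2) (le_csSup hb h1)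

lemma cnt_mono (hτmono : ∀ k l, k ≤ l → l ≤ m → τ k ≤ τ l) {k l : ℕ}
    (hkl : k ≤ l) (hl : l ≤ m) (q : Fin m → ℝ) : cnt m τ k q ≤ cnt m τ l q := by
  apply Finset.card_le_card
  intro j hj
  simp only [Finset.mem_filter, Finset.mem_univ, true_and] at hj ⊢
  exact hj.trans (hτmono k l hkl hl)

lemma card_rejSU (hτmono : ∀ k l, k ≤ l → l ≤ m → τ k ≤ τ l) (q : Fin m → ℝ) :
    (rejSU m τ q).card = numRejSU m τ q := by
  set n := numRejSU m τ q with hn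
  have h1 : n ≤ cnt m τ n q := (numRej_mem q).2
  have h2 : cnt m τ n q ≤ n := by
    by_contra h
    push_neg at h
    have hnm : n + 1 ≤ m := by
      rcases Nat.lt_or_ge n m with h' | h'
      · exact h'
      · have := cnt_le (m := m) (τ := τ) n q
        omega
    have : n + 1 ∈ S m τ q := by
      refine ⟨hnm, ?_⟩
      exact le_trans h (cnt_mono hτmono (Nat.le_succ n) hnm q)
    exact absurd (le_numRej this) (by omega)
  have : (rejSU m τ q).card = cnt m τ n q := rfl
  omega

section LOO

variable (hτmono : ∀ k l, k ≤ l → l ≤ m → τ k ≤ τ l) (hτnn : ∀ k ≤ m, 0 ≤ τ k)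

lemma S_subset_update (hτnn : ∀ k ≤ m, 0 ≤ τ k) (q : Fin m → ℝ) (i : Fin m) :
    S m τ q ⊆ S m τ (Function.update q i 0) := by
  rintro k ⟨hkm, hkc⟩
  refine ⟨hkm, hkc.trans ?_⟩
  apply Finset.card_le_card
  intro j hj
  simp only [Finset.mem_filter, Finset.mem_univ, true_and] at hj ⊢
  rcases eq_or_ne j i with rfl | hji
  · simpa using hτnn k hkm
  · simpa [Function.update_apply, hji] using hj

lemma numRej_le_update (hτnn : ∀ k ≤ m, 0 ≤ τ k) (q : Fin m → ℝ) (i : Fin m) :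
    numRejSU m τ q ≤ numRejSU m τ (Function.update q i 0) :=
  le_numRej (S_subset_update hτnn q i (numRej_mem q))

lemma one_le_numRej_update (hm : 1 ≤ m) (hτnn : ∀ k ≤ m, 0 ≤ τ k)
    (q : Fin m → ℝ) (i : Fin m) : 1 ≤ numRejSU m τ (Function.update q i 0) := by
  apply le_numRej
  refine ⟨hm, ?_⟩
  rw [cnt]
  exact Finset.card_pos.mpr ⟨i, by simp [Function.update_self, hτnn 1 hm]⟩

lemma numRej_update_eq (hτmono : ∀ k l, k ≤ l → l ≤ m → τ k ≤ τ l)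
    (hτnn : ∀ k ≤ m, 0 ≤ τ k) {q : Fin m → ℝ} {i : Fin m}
    (hq : q i ≤ τ (numRejSU m τ (Function.update q i 0))) :
    numRejSU m τ q = numRejSU m τ (Function.update q i 0) := by
  set n' := numRejSU m τ (Function.update q i 0) with hn'
  have hmem : n' ∈ S m τ q := by
    refine ⟨numRej_le_m _, ?_⟩
    have : cnt m τ n' (Function.update q i 0) = cnt m τ n' q := by
      unfold cnt
      congr 1
      apply Finset.filter_congr
      intro j _
      rcases eq_or_ne j i with rfl | hji
      · simp [Function.update_self, hq, hτnn n' (numRej_le_m _)]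
      · simp [Function.update_apply, hji]
    exact this ▸ (numRej_mem (Function.update q i 0)).2
  exact le_antisymm (numRej_le_update hτnn q i) (le_numRej hmem)

lemma rej_iff (hτmono : ∀ k l, k ≤ l → l ≤ m → τ k ≤ τ l)
    (hτnn : ∀ k ≤ m, 0 ≤ τ k) (q : Fin m → ℝ) (i : Fin m) :
    q i ≤ τ (numRejSU m τ q) ↔ q i ≤ τ (numRejSU m τ (Function.update q i 0)) := by
  constructor
  · intro h
    exact h.trans (hτmono _ _ (numRej_le_update hτnn q i) (numRej_le_m _))
  · intro h
    rwa [numRej_update_eq hτmono hτnn h]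

end LOO

lemma FDP_rejSU_eq (hm : 1 ≤ m) (hτmono : ∀ k l, k ≤ l → l ≤ m → τ k ≤ τ l)
    (hτnn : ∀ k ≤ m, 0 ≤ τ k) (H0 : Finset (Fin m)) (q : Fin m → ℝ) :
    FDP m H0 (rejSU m τ q) =
      ∑ i ∈ H0, (if q i ≤ τ (numRejSU m τ (Function.update q i 0))
        then ((numRejSU m τ (Function.update q i 0) : ℝ))⁻¹ else 0) := by
  classical
  set n := numRejSU m τ q with hn
  have hcard : (rejSU m τ q).card = n := card_rejSU hτmono q
  have hRH : ((rejSU m τ q ∩ H0).card : ℝ)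
      = ∑ i ∈ H0, (if i ∈ rejSU m τ q then (1:ℝ) else 0) := by
    rw [Finset.inter_comm, ← Finset.filter_mem_eq_inter, Finset.card_filter]
    push_cast
    rfl
  rw [FDP, hcard, hRH, Finset.sum_div]
  apply Finset.sum_congr rfl
  intro i hi
  have hmem : i ∈ rejSU m τ q ↔ q i ≤ τ n := by simp [rejSU, hn]
  by_cases h : q i ≤ τ n
  · have h' : q i ≤ τ (numRejSU m τ (Function.update q i 0)) :=
      (rej_iff hτmono hτnn q i).1 h
    have heq : n = numRejSU m τ (Function.update q i 0) :=
      numRej_update_eq hτmono hτnn h'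
    have h1 : 1 ≤ n := heq ▸ one_le_numRej_update hm hτnn q i
    rw [if_pos (hmem.mpr h), if_pos h', ← heq,
      max_eq_left (by exact_mod_cast h1), one_div]
  · rw [if_neg (fun hc => h (hmem.mp hc)),
      if_neg (fun hc => h ((rej_iff hτmono hτnn q i).2 hc))]
    simp

end FDRaux

namespace FDRaux2
open FDRaux

variable {m : ℕ} {τ : ℕ → ℝ}

lemma measurable_cnt (k : ℕ) : Measurable (cnt m τ k) := by
  have h : cnt m τ k = fun q : Fin m → ℝ => ∑ j : Fin m, if q j ≤ τ k then 1 else 0 := by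
    funext q; rw [cnt, Finset.card_filter]
  rw [h]
  apply Finset.measurable_sum
  intro j _
  exact Measurable.ite (measurableSet_le (measurable_pi_apply j) measurable_const)
    measurable_const measurable_const

lemma measurableSet_S_mem (k : ℕ) : MeasurableSet {q : Fin m → ℝ | k ∈ S m τ q} := by
  by_cases hk : k ≤ m
  · have h : {q : Fin m → ℝ | k ∈ S m τ q} = (cnt m τ k) ⁻¹' {n | k ≤ n} := by
      ext q; simp [S, hk]
    rw [h]
    exact measurable_cnt k MeasurableSet.of_discrete
  · have h : {q : Fin m → ℝ | k ∈ S m τ q} = ∅ := by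
      ext q; simp [S, hk]
    rw [h]; exact MeasurableSet.empty

lemma measurable_numRej : Measurable (numRejSU m τ) := by
  apply measurable_to_countable'
  intro n
  have h : (numRejSU m τ) ⁻¹' {n} =
      {q : Fin m → ℝ | n ∈ S m τ q} ∩
        ⋂ k, ({q : Fin m → ℝ | k ∈ S m τ q} ∩ {q : Fin m → ℝ | ¬ k ≤ n})ᶜ := by
    ext q
    simp only [Set.mem_preimage, Set.mem_singleton_iff, numRej_eq,
      sSup_eq_iff' (S_zero q) (S_bdd q), Set.mem_inter_iff, Set.mem_iInter,
      Set.mem_compl_iff, Set.mem_setOf_eq]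
    constructor
    · rintro ⟨h1, h2⟩
      exact ⟨h1, fun k => by rintro ⟨hk1, hk2⟩; exact hk2 (h2 k hk1)⟩
    · rintro ⟨h1, h2⟩
      refine ⟨h1, fun k hk => ?_⟩
      by_contra hkn
      exact h2 k ⟨hk, hkn⟩
  rw [h]
  refine (measurableSet_S_mem n).inter (MeasurableSet.iInter fun k => ?_)
  refine ((measurableSet_S_mem k).inter ?_).compl
  by_cases hkn : k ≤ n
  · have : {q : Fin m → ℝ | ¬ k ≤ n} = ∅ := by ext q; simp [hkn]
    rw [this]; exact MeasurableSet.empty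
  · have : {q : Fin m → ℝ | ¬ k ≤ n} = Set.univ := by ext q; simp [hkn]
    rw [this]; exact MeasurableSet.univ

end FDRaux2

open FDRaux FDRaux2 in
lemma main_bound
    {Ω : Type*} [MeasurableSpace Ω] (P : Measure Ω) [IsProbabilityMeasure P]
    (m : ℕ) (hm : 1 ≤ m)
    (p : Fin m → Ω → ℝ) (hmeas : ∀ i, Measurable (p i))
    (hp01 : ∀ i ω, p i ω ∈ Set.Icc (0 : ℝ) 1)
    (hindep : iIndepFun p P)
    (H0 : Finset (Fin m))
    (hnull : ∀ i ∈ H0, ∀ t ∈ Set.Icc (0 : ℝ) 1,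
      P {ω | p i ω ≤ t} ≤ ENNReal.ofReal t)
    (τ : ℕ → ℝ)
    (hτmono : ∀ k l, k ≤ l → l ≤ m → τ k ≤ τ l)
    (hτ01 : ∀ k ≤ m, τ k ∈ Set.Icc (0 : ℝ) 1) :
    ∫ ω, FDP m H0 (rejSU m τ (fun j => p j ω)) ∂P
      ≤ (m : ℝ) * (Finset.Icc 1 m).sup' (Finset.nonempty_Icc.mpr hm)
          (fun k => τ k / (k : ℝ)) := by
  classical
  have hτnn : ∀ k ≤ m, 0 ≤ τ k := fun k hk => (hτ01 k hk).1
  set M : ℝ := (Finset.Icc 1 m).sup' (Finset.nonempty_Icc.mpr hm)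
    (fun k => τ k / (k : ℝ)) with hM
  have hM0 : 0 ≤ M := by
    have h1 : (1 : ℕ) ∈ Finset.Icc 1 m := Finset.mem_Icc.mpr ⟨le_refl 1, hm⟩
    have := Finset.le_sup' (fun k => τ k / (k : ℝ)) h1
    have h2 : 0 ≤ τ 1 / (1 : ℝ) := by
      have := hτnn 1 hm; positivity
    linarith
  have hτleM : ∀ k ∈ Finset.Icc 1 m, τ k ≤ (k : ℝ) * M := by
    intro k hk
    obtain ⟨hk1, hkm⟩ := Finset.mem_Icc.mp hk
    have hkpos : (0 : ℝ) < k := by exact_mod_cast hk1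
    have := Finset.le_sup' (fun k => τ k / (k : ℝ)) hk
    rw [div_le_iff₀ hkpos] at this
    linarith [this]
  -- the leave-one-out rejection count
  set K : Fin m → Ω → ℕ :=
    fun i ω => numRejSU m τ (Function.update (fun j => p j ω) i 0) with hK
  have measK : ∀ i, Measurable (K i) := by
    intro i
    apply measurable_numRej.comp
    apply measurable_pi_lambda
    intro j
    rcases eq_or_ne j i with rfl | hji
    · simp only [Function.update_self]; exact measurable_const
    · simp only [Function.update_of_ne hji]; exact hmeas j
  set A : Fin m → ℕ → Set Ω := fun i k => K i ⁻¹' {k} with hA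
  set B : Fin m → ℕ → Set Ω := fun i k => p i ⁻¹' Set.Iic (τ k) with hB
  have measA : ∀ i k, MeasurableSet (A i k) :=
    fun i k => measK i (measurableSet_singleton k)
  have measB : ∀ i k, MeasurableSet (B i k) :=
    fun i k => (hmeas i) measurableSet_Iic
  -- pointwise identity
  have fdp_eq : ∀ ω, FDP m H0 (rejSU m τ (fun j => p j ω)) =
      ∑ i ∈ H0, ∑ k ∈ Finset.Icc 1 m,
        Set.indicator (A i k ∩ B i k) (fun _ => (k : ℝ)⁻¹) ω := by
    intro ω
    rw [FDP_rejSU_eq hm hτmono hτnn H0 (fun j => p j ω)]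
    refine Finset.sum_congr rfl fun i _ => ?_
    have hKmem : K i ω ∈ Finset.Icc 1 m :=
      Finset.mem_Icc.mpr ⟨one_le_numRej_update hm hτnn _ i, numRej_le_m _⟩
    rw [Finset.sum_eq_single_of_mem (K i ω) hKmem]
    · by_cases h : p i ω ≤ τ (K i ω)
      · have hmemAB : ω ∈ A i (K i ω) ∩ B i (K i ω) :=
          Set.mem_inter (show K i ω ∈ ({K i ω} : Set ℕ) from rfl) h
        rw [if_pos h, Set.indicator_of_mem hmemAB]
      · have hnm : ω ∉ A i (K i ω) ∩ B i (K i ω) := fun hc => h hc.2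
        rw [if_neg h, Set.indicator_of_notMem hnm]
    · intro b _ hb
      have hnm : ω ∉ A i b ∩ B i b := fun hc => hb ((Set.mem_singleton_iff.mp hc.1).symm)
      exact Set.indicator_of_notMem hnm _
  -- integrability
  have intg : ∀ i k, Integrable
      (Set.indicator (A i k ∩ B i k) fun _ => (k : ℝ)⁻¹) P :=
    fun i k => (integrable_const _).indicator ((measA i k).inter (measB i k))
  -- independence of K i and p i
  have hkey : ∀ i k, P (A i k ∩ B i k) = P (A i k) * P (B i k) := by
    intro i k
    set Sc : Finset (Fin m) := {i}ᶜ with hSc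
    have hIF := hindep.indepFun_finset Sc {i} disjoint_compl_left hmeas
    set φ : (Sc → ℝ) → ℕ :=
      fun x => numRejSU m τ (fun j => if h : j ∈ Sc then x ⟨j, h⟩ else 0) with hφ
    have measφ : Measurable φ := by
      apply measurable_numRej.comp
      apply measurable_pi_lambda
      intro j
      by_cases h : j ∈ Sc
      · simp only [dif_pos h]; exact measurable_pi_apply _
      · simp only [dif_neg h]; exact measurable_const
    set ψ : (({i} : Finset (Fin m)) → ℝ) → ℝ :=
      fun y => y ⟨i, Finset.mem_singleton_self i⟩ with hψ
    have measψ : Measurable ψ := measurable_pi_apply _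
    have hcomp := hIF.comp measφ measψ
    have heq1 : (φ ∘ fun ω (j : Sc) => p j ω) = K i := by
      funext ω
      simp only [Function.comp_apply, hφ, hK]
      congr 1
      funext j
      rcases eq_or_ne j i with rfl | hji
      · simp [hSc]
      · simp [hSc, hji, Function.update_of_ne hji]
    have heq2 : (ψ ∘ fun ω (j : ({i} : Finset (Fin m))) => p j ω) = p i := rfl
    rw [heq1, heq2] at hcomp
    exact hcomp.measure_inter_preimage_eq_mul {k} (Set.Iic (τ k))
      (measurableSet_singleton k) measurableSet_Iic
  -- integral computation
  have hint : ∫ ω, FDP m H0 (rejSU m τ (fun j => p j ω)) ∂P =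
      ∑ i ∈ H0, ∑ k ∈ Finset.Icc 1 m,
        (P (A i k ∩ B i k)).toReal * (k : ℝ)⁻¹ := by
    rw [integral_congr_ae (Filter.Eventually.of_forall fdp_eq)]
    rw [integral_finset_sum _ (fun i _ => integrable_finset_sum _ (fun k _ => intg i k))]
    refine Finset.sum_congr rfl fun i _ => ?_
    rw [integral_finset_sum _ (fun k _ => intg i k)]
    refine Finset.sum_congr rfl fun k _ => ?_
    rw [integral_indicator_const _ ((measA i k).inter (measB i k))]
    simp [mul_comm, Measure.real]
  rw [hint]
  -- bound each i-term by M
  have hterm : ∀ i ∈ H0, ∑ k ∈ Finset.Icc 1 m,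
      (P (A i k ∩ B i k)).toReal * (k : ℝ)⁻¹ ≤ M := by
    intro i hi
    have hstep : ∀ k ∈ Finset.Icc 1 m,
        (P (A i k ∩ B i k)).toReal * (k : ℝ)⁻¹ ≤ (P (A i k)).toReal * M := by
      intro k hk
      obtain ⟨hk1, hkm⟩ := Finset.mem_Icc.mp hk
      have hkpos : (0 : ℝ) < k := by exact_mod_cast hk1
      have hBk : (P (B i k)).toReal ≤ τ k := by
        have h1 : P (B i k) ≤ ENNReal.ofReal (τ k) := by
          have := hnull i hi (τ k) (hτ01 k hkm)
          exact this
        calc (P (B i k)).toReal ≤ (ENNReal.ofReal (τ k)).toReal :=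
              ENNReal.toReal_mono ENNReal.ofReal_ne_top h1
          _ = τ k := ENNReal.toReal_ofReal (hτnn k hkm)
      have hABtoReal : (P (A i k ∩ B i k)).toReal
          = (P (A i k)).toReal * (P (B i k)).toReal := by
        rw [hkey i k, ENNReal.toReal_mul]
      rw [hABtoReal]
      have hAnn : 0 ≤ (P (A i k)).toReal := ENNReal.toReal_nonneg
      calc (P (A i k)).toReal * (P (B i k)).toReal * (k : ℝ)⁻¹
          ≤ (P (A i k)).toReal * ((k : ℝ) * M) * (k : ℝ)⁻¹ := by
            apply mul_le_mul_of_nonneg_right _ (by positivity)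
            exact mul_le_mul_of_nonneg_left (hBk.trans (hτleM k hk)) hAnn
        _ = (P (A i k)).toReal * M := by field_simp
    calc ∑ k ∈ Finset.Icc 1 m, (P (A i k ∩ B i k)).toReal * (k : ℝ)⁻¹
        ≤ ∑ k ∈ Finset.Icc 1 m, (P (A i k)).toReal * M :=
          Finset.sum_le_sum hstep
      _ = (∑ k ∈ Finset.Icc 1 m, (P (A i k)).toReal) * M := by
          rw [Finset.sum_mul]
      _ ≤ 1 * M := by
          apply mul_le_mul_of_nonneg_right _ hM0
          have hdisj : (↑(Finset.Icc 1 m) : Set ℕ).PairwiseDisjoint (A i) := by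
            intro k _ l _ hkl
            apply Set.disjoint_left.mpr
            rintro ω h1 h2
            exact hkl ((Set.mem_preimage.mp h1).symm.trans (Set.mem_preimage.mp h2))
          have hsum : ∑ k ∈ Finset.Icc 1 m, P (A i k)
              = P (⋃ k ∈ Finset.Icc 1 m, A i k) :=
            (measure_biUnion_finset hdisj (fun k _ => measA i k)).symm
          have hle : ∑ k ∈ Finset.Icc 1 m, P (A i k) ≤ 1 := by
            rw [hsum]
            exact prob_le_one
          calc ∑ k ∈ Finset.Icc 1 m, (P (A i k)).toReal
              = (∑ k ∈ Finset.Icc 1 m, P (A i k)).toReal :=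
                (ENNReal.toReal_sum (fun k _ => measure_ne_top P _)).symm
            _ ≤ (1 : ENNReal).toReal := ENNReal.toReal_mono ENNReal.one_ne_top hle
            _ = 1 := by simp
      _ = M := one_mul M
  calc ∑ i ∈ H0, ∑ k ∈ Finset.Icc 1 m, (P (A i k ∩ B i k)).toReal * (k : ℝ)⁻¹
      ≤ ∑ _i ∈ H0, M := Finset.sum_le_sum hterm
    _ = (H0.card : ℝ) * M := by rw [Finset.sum_const, nsmul_eq_mul]
    _ ≤ (m : ℝ) * M := by
        have hcard : (H0.card : ℝ) ≤ (m : ℝ) := by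
          exact_mod_cast (Finset.card_le_card (Finset.subset_univ H0)).trans_eq (by simp)
        exact mul_le_mul_of_nonneg_right hcard hM0

/-- under super-uniform null p-values,
`FDR(SU(τ)) ≤ m · max_{1 ≤ k ≤ m} τ_k/k`; in particular the Benjamini-Hochberg
procedure `τ_k = α k / m` has `FDR ≤ α`. -/
theorem fdr_su_superuniform_bound_and_BH
    {Ω : Type*} [MeasurableSpace Ω] (P : Measure Ω) [IsProbabilityMeasure P]
    (m : ℕ) (hm : 1 ≤ m)
    (p : Fin m → Ω → ℝ) (hmeas : ∀ i, Measurable (p i))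
    (hp01 : ∀ i ω, p i ω ∈ Set.Icc (0 : ℝ) 1)
    (hindep : iIndepFun p P)
    (H0 : Finset (Fin m))
    (hnull : ∀ i ∈ H0, ∀ t ∈ Set.Icc (0 : ℝ) 1,
      P {ω | p i ω ≤ t} ≤ ENNReal.ofReal t)
    (τ : ℕ → ℝ) (hτ0 : τ 0 = 0)
    (hτmono : ∀ k l, k ≤ l → l ≤ m → τ k ≤ τ l)
    (hτ01 : ∀ k ≤ m, τ k ∈ Set.Icc (0 : ℝ) 1)
    (α : ℝ) (hα : α ∈ Set.Ioo (0 : ℝ) 1) :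
    (∫ ω, FDP m H0 (rejSU m τ (fun j => p j ω)) ∂P
      ≤ (m : ℝ) * (Finset.Icc 1 m).sup' (Finset.nonempty_Icc.mpr hm) (fun k => τ k / (k : ℝ)))
    ∧ (∫ ω, FDP m H0 (rejSU m (fun k => α * k / m) (fun j => p j ω)) ∂P ≤ α) := by
  have hm0 : (0 : ℝ) < m := by exact_mod_cast hm
  obtain ⟨hα0, hα1⟩ := hα
  constructor
  · exact main_bound P m hm p hmeas hp01 hindep H0 hnull τ hτmono hτ01
  · set τ' : ℕ → ℝ := fun k => α * k / m with hτ'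
    have hmono' : ∀ k l, k ≤ l → l ≤ m → τ' k ≤ τ' l := by
      intro k l hkl _
      have hkl' : (k : ℝ) ≤ l := by exact_mod_cast hkl
      simp only [hτ']
      gcongr
    have h01' : ∀ k ≤ m, τ' k ∈ Set.Icc (0 : ℝ) 1 := by
      intro k hk
      have hk' : (k : ℝ) ≤ m := by exact_mod_cast hk
      constructor
      · positivity
      · rw [div_le_one hm0]
        nlinarith [Nat.cast_nonneg (α := ℝ) k]
    have hbound := main_bound P m hm p hmeas hp01 hindep H0 hnull τ' hmono' h01'
    refine hbound.trans ?_
    have hsup : (Finset.Icc 1 m).sup' (Finset.nonempty_Icc.mpr hm)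
        (fun k => τ' k / (k : ℝ)) ≤ α / m := by
      apply Finset.sup'_le
      intro k hk
      obtain ⟨hk1, _⟩ := Finset.mem_Icc.mp hk
      have hk0 : (k : ℝ) ≠ 0 := by positivity
      have : τ' k / (k : ℝ) = α / m := by
        simp only [hτ']
        field_simp
      rw [this]
    calc (m : ℝ) * (Finset.Icc 1 m).sup' (Finset.nonempty_Icc.mpr hm)
          (fun k => τ' k / (k : ℝ))
        ≤ (m : ℝ) * (α / m) := by
          exact mul_le_mul_of_nonneg_left hsup (le_of_lt hm0)
      _ = α := by field_simp
end

section
/- Assume additionally that the null p-values are super-uniform, i.e. P(p_i ≤ t) ≤ t for all t ∈ [0,1] and all i ∈ H_0. Then for any nondecreasing sequence of critical values τ = (τ_1, …, τ_m) ∈ [0,1]^m with τ_k < 1 for all k, the false discovery rate of the step-down procedure SD(τ) satisfies FDR(SD(τ)) ≤ max_{1 ≤ k ≤ m} ((m−k+1)/(1−τ_k)) · (τ_k/k). In particular, the Gavrilov–Benjamini–Sarkar step-down procedure, given by τ_k = αk/(m−(1−α)k+1) for α ∈ (0,1), satisfies FDR ≤ α. -/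
open MeasureTheory ProbabilityTheory Finset

namespace FDR6aux

noncomputable def cnt (m : ℕ) (τ : ℕ → ℝ) (q : Fin m → ℝ) (k : ℕ) : ℕ :=
  (univ.filter (fun j => q j ≤ τ k)).card

def SDset (m : ℕ) (τ : ℕ → ℝ) (q : Fin m → ℝ) : Set ℕ :=
  {k | k ≤ m ∧ ∀ k' ≤ k, k' ≤ cnt m τ q k'}

variable {m : ℕ} {τ : ℕ → ℝ} {q : Fin m → ℝ}

lemma numRejSD_eq_sSup : numRejSD m τ q = sSup (SDset m τ q) := rfl

lemma zero_mem_SDset : 0 ∈ SDset m τ q :=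
  ⟨Nat.zero_le m, fun k' hk' => by omega⟩

lemma bddAbove_SDset : BddAbove (SDset m τ q) :=
  ⟨m, fun _ hk => hk.1⟩

lemma numRejSD_mem : numRejSD m τ q ∈ SDset m τ q := by
  rw [numRejSD_eq_sSup]
  exact Nat.sSup_mem ⟨0, zero_mem_SDset⟩ bddAbove_SDset

lemma le_numRejSD {k : ℕ} (h : k ∈ SDset m τ q) : k ≤ numRejSD m τ q :=
  le_csSup bddAbove_SDset h

lemma numRejSD_le : numRejSD m τ q ≤ m := numRejSD_mem.1

lemma numRejSD_le_cnt {k : ℕ} (hk : k ≤ numRejSD m τ q) : k ≤ cnt m τ q k :=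
  numRejSD_mem.2 k hk

lemma succ_not_mem_SDset : numRejSD m τ q + 1 ∉ SDset m τ q := by
  intro h
  have := le_numRejSD h
  omega

lemma cnt_succ_lt (h : numRejSD m τ q < m) :
    cnt m τ q (numRejSD m τ q + 1) < numRejSD m τ q + 1 := by
  by_contra hc
  push_neg at hc
  apply succ_not_mem_SDset (m := m) (τ := τ) (q := q)
  refine ⟨by omega, fun k' hk' => ?_⟩
  rcases Nat.lt_or_ge k' (numRejSD m τ q + 1) with h' | h'
  · exact numRejSD_mem.2 k' (by omega)
  · have hk'' : k' = numRejSD m τ q + 1 := by omega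
    subst hk''
    exact hc

/-- Characterization of `numRejSD q = a`. -/
lemma numRejSD_eq_iff {a : ℕ} :
    numRejSD m τ q = a ↔ a ∈ SDset m τ q ∧ a + 1 ∉ SDset m τ q := by
  constructor
  · rintro rfl
    exact ⟨numRejSD_mem, succ_not_mem_SDset⟩
  · rintro ⟨h1, h2⟩
    have hle := le_numRejSD h1
    have hlt : numRejSD m τ q < a + 1 := by
      by_contra hc
      push_neg at hc
      exact h2 ⟨le_trans hc numRejSD_le, fun k' hk' => numRejSD_mem.2 k' (le_trans hk' hc)⟩
    omega

section withTau

variable (hτmono : ∀ k l, k ≤ l → l ≤ m → τ k ≤ τ l)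
variable (hτ01 : ∀ k ≤ m, τ k ∈ Set.Icc (0 : ℝ) 1)

include hτmono hτ01

omit hτmono in
lemma cnt_mono {k l : ℕ} (hkl : k ≤ l) (hl : l ≤ m)
    (hτmono : ∀ k l, k ≤ l → l ≤ m → τ k ≤ τ l) :
    cnt m τ q k ≤ cnt m τ q l := by
  apply Finset.card_le_card
  intro j hj
  simp only [Finset.mem_filter] at hj ⊢
  exact ⟨hj.1, le_trans hj.2 (hτmono k l hkl hl)⟩

variable {i : Fin m}

omit hτmono in
lemma filter_update {k : ℕ} (hk : k ≤ m) :
    (univ.filter (fun j => Function.update q i 2 j ≤ τ k))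
      = (univ.filter (fun j => q j ≤ τ k)).erase i := by
  have h2 : τ k < 2 := lt_of_le_of_lt (hτ01 k hk).2 (by norm_num)
  ext j
  simp only [mem_filter, mem_univ, true_and, mem_erase, Function.update_apply]
  by_cases h : j = i
  · subst h
    simp [not_le]
    linarith
  · simp [Function.update_of_ne h, h]

omit hτmono in
lemma cnt_update_le {k : ℕ} (hk : k ≤ m) :
    cnt m τ (Function.update q i 2) k ≤ cnt m τ q k := by
  rw [cnt, filter_update hτ01 hk]
  exact Finset.card_erase_le

omit hτmono in
lemma cnt_update_eq_of_gt {k : ℕ} (hk : k ≤ m) (h : τ k < q i) :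
    cnt m τ (Function.update q i 2) k = cnt m τ q k := by
  rw [cnt, filter_update hτ01 hk, cnt, Finset.erase_eq_of_notMem]
  simp [not_le.2 h]

omit hτmono in
lemma cnt_eq_update_succ {k : ℕ} (hk : k ≤ m) (h : q i ≤ τ k) :
    cnt m τ q k = cnt m τ (Function.update q i 2) k + 1 := by
  have hmem : i ∈ univ.filter (fun j => q j ≤ τ k) := by simp [h]
  have hpos : 0 < cnt m τ q k := Finset.card_pos.2 ⟨i, hmem⟩
  have h1 : cnt m τ (Function.update q i 2) k = cnt m τ q k - 1 := by
    rw [cnt, filter_update hτ01 hk, Finset.card_erase_of_mem hmem]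
    rfl
  omega

end withTau

/-- `A m τ q i`: number of rejections of the step-down on `q` with coordinate `i` removed. -/
noncomputable def A (m : ℕ) (τ : ℕ → ℝ) (q : Fin m → ℝ) (i : Fin m) : ℕ :=
  numRejSD m τ (Function.update q i 2)

section detMain

variable (hm : 1 ≤ m)
variable (hτ0 : τ 0 = 0)
variable (hτmono : ∀ k l, k ≤ l → l ≤ m → τ k ≤ τ l)
variable (hτ01 : ∀ k ≤ m, τ k ∈ Set.Icc (0 : ℝ) 1)
variable {i : Fin m}

include hm hτ01 in
lemma A_lt : A m τ q i < m := by
  have h1 : A m τ q i ≤ m := numRejSD_le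
  rcases lt_or_eq_of_le h1 with h | h
  · exact h
  · exfalso
    have h2 : m ≤ cnt m τ (Function.update q i 2) m :=
      numRejSD_le_cnt (q := Function.update q i 2) h.ge
    have h3 : cnt m τ (Function.update q i 2) m ≤ (univ.erase i).card := by
      rw [cnt, filter_update hτ01 le_rfl]
      exact Finset.card_le_card (Finset.erase_subset_erase _ (Finset.filter_subset _ _))
    rw [Finset.card_erase_of_mem (mem_univ i), Finset.card_univ, Fintype.card_fin] at h3
    omega

include hm hτ01 in
/-- Acceptance lemma: if `q i > τ (A+1)` then the full step-down equals `A`. -/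
lemma numRejSD_eq_A (h : τ (A m τ q i + 1) < q i) : numRejSD m τ q = A m τ q i := by
  have hAlt : A m τ q i < m := A_lt hm hτ01
  have hge : A m τ q i ≤ numRejSD m τ q := by
    apply le_numRejSD
    refine ⟨le_of_lt hAlt, fun k' hk' => ?_⟩
    exact le_trans (numRejSD_mem.2 k' hk') (cnt_update_le hτ01 (by omega))
  have hle : numRejSD m τ q ≤ A m τ q i := by
    by_contra hc
    push_neg at hc
    have h4 : A m τ q i + 1 ≤ cnt m τ q (A m τ q i + 1) := numRejSD_le_cnt (by omega)
    have h5 : cnt m τ (Function.update q i 2) (A m τ q i + 1)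
        = cnt m τ q (A m τ q i + 1) := cnt_update_eq_of_gt hτ01 (by omega) h
    have h6 := cnt_succ_lt (q := Function.update q i 2) hAlt
    have hAdef : A m τ q i = numRejSD m τ (Function.update q i 2) := rfl
    rw [← hAdef] at h6
    omega
  omega

include hm hτ0 hτ01 in
lemma one_le_numRejSD_of_rej (hq0 : 0 ≤ q i) (h : q i ≤ τ (numRejSD m τ q)) :
    1 ≤ numRejSD m τ q := by
  by_contra hc
  push_neg at hc
  have hN0 : numRejSD m τ q = 0 := by omega
  rw [hN0, hτ0] at h
  have hq1 : q i ≤ τ 1 := le_trans h (by linarith [(hτ01 1 hm).1])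
  have h1 : 1 ∈ SDset m τ q := by
    refine ⟨hm, fun k' hk' => ?_⟩
    have h1c : 1 ≤ cnt m τ q 1 := Finset.card_pos.2 ⟨i, by simp [hq1]⟩
    interval_cases k'
    · omega
    · exact h1c
  have := le_numRejSD h1
  omega

include hm hτmono hτ01 in
/-- Rejection lemma (b): a rejected p-value is `≤ τ (A+1)`. -/
lemma rej_le_A_succ (h : q i ≤ τ (numRejSD m τ q)) : q i ≤ τ (A m τ q i + 1) := by
  by_contra hc
  push_neg at hc
  have hk := numRejSD_eq_A hm hτ01 hc
  rw [hk] at h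
  have hAlt : A m τ q i < m := A_lt hm hτ01
  have : τ (A m τ q i) ≤ τ (A m τ q i + 1) := hτmono _ _ (by omega) (by omega)
  linarith

include hm hτ0 hτmono hτ01 in
/-- Rejection lemma (a): if `i` is rejected then `A + 1 ≤ numRejSD`. -/
lemma A_succ_le_numRejSD (hq0 : 0 ≤ q i) (h : q i ≤ τ (numRejSD m τ q)) :
    A m τ q i + 1 ≤ numRejSD m τ q := by
  set N := numRejSD m τ q with hN
  have hN1 : 1 ≤ N := one_le_numRejSD_of_rej hm hτ0 hτ01 hq0 h
  by_contra hc
  push_neg at hc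
  have hAN : N ≤ A m τ q i := by omega
  have hNm : N < m := lt_of_le_of_lt hAN (A_lt hm hτ01)
  have hsucc : N + 1 ∈ SDset m τ q := by
    refine ⟨by omega, fun k' hk' => ?_⟩
    rcases Nat.lt_or_ge k' (N + 1) with h' | h'
    · exact numRejSD_mem.2 k' (by omega)
    · have hk'' : k' = N + 1 := by omega
      subst hk''
      have hq1 : q i ≤ τ (N + 1) := le_trans h (hτmono N (N + 1) (by omega) (by omega))
      have e1 : cnt m τ q (N + 1) = cnt m τ (Function.update q i 2) (N + 1) + 1 :=
        cnt_eq_update_succ hτ01 (by omega) hq1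
      have e2 : N ≤ cnt m τ (Function.update q i 2) N :=
        numRejSD_le_cnt hAN
      have e3 : cnt m τ (Function.update q i 2) N ≤ cnt m τ (Function.update q i 2) (N + 1) :=
        cnt_mono hτ01 (by omega) (by omega) hτmono
      omega
  have := le_numRejSD hsucc
  omega

/-- Pointwise acceptance lemma. -/
lemma sum_acc_le_one (hm : 1 ≤ m) (hτ01 : ∀ k ≤ m, τ k ∈ Set.Icc (0 : ℝ) 1)
    (hτmono : ∀ k l, k ≤ l → l ≤ m → τ k ≤ τ l) (q : Fin m → ℝ) :
    ∑ i : Fin m, (if τ (A m τ q i + 1) < q i then ((m - A m τ q i : ℕ) : ℝ)⁻¹ else 0) ≤ 1 := by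
  classical
  rw [← Finset.sum_filter]
  set T := univ.filter (fun i => τ (A m τ q i + 1) < q i) with hT
  rcases T.eq_empty_or_nonempty with h | ⟨i0, hi0⟩
  · rw [h]; simp
  · have hi0' : τ (A m τ q i0 + 1) < q i0 := by
      rw [hT] at hi0; exact (Finset.mem_filter.1 hi0).2
    set κ := numRejSD m τ q with hκdef
    have hκ : κ = A m τ q i0 := numRejSD_eq_A hm hτ01 hi0'
    have hAeq : ∀ i ∈ T, A m τ q i = κ := by
      intro i hi
      have : τ (A m τ q i + 1) < q i := by
        rw [hT] at hi; exact (Finset.mem_filter.1 hi).2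
      exact (numRejSD_eq_A hm hτ01 this).symm
    have hκm : κ < m := by rw [hκ]; exact A_lt hm hτ01
    have hTsub : T ⊆ univ.filter (fun i => τ (κ + 1) < q i) := by
      intro i hi
      have h2 := hAeq i hi
      rw [hT] at hi
      have h3 := (Finset.mem_filter.1 hi).2
      rw [h2] at h3
      simp [h3]
    have hcard2 : (univ.filter (fun i => τ (κ + 1) < q i)).card = m - cnt m τ q (κ + 1) := by
      have hsplit := Finset.card_filter_add_card_filter_not
        (s := (univ : Finset (Fin m))) (p := fun i => q i ≤ τ (κ + 1))
      have : (univ.filter (fun i => τ (κ + 1) < q i))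
          = (univ.filter (fun i => ¬ (q i ≤ τ (κ + 1)))) := by
        apply Finset.filter_congr
        intro j _
        simp [not_le]
      rw [this]
      have hcu : (univ : Finset (Fin m)).card = m := by
        rw [Finset.card_univ, Fintype.card_fin]
      rw [cnt] at *
      omega
    have hcnt : κ ≤ cnt m τ q (κ + 1) :=
      le_trans (numRejSD_le_cnt le_rfl) (cnt_mono hτ01 (by omega) (by omega) hτmono)
    have hTcard : T.card ≤ m - κ := by
      have := Finset.card_le_card hTsub
      omega
    calc ∑ i ∈ T, ((m - A m τ q i : ℕ) : ℝ)⁻¹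
        = ∑ _i ∈ T, ((m - κ : ℕ) : ℝ)⁻¹ := by
          apply Finset.sum_congr rfl
          intro i hi
          rw [hAeq i hi]
      _ = (T.card : ℝ) * ((m - κ : ℕ) : ℝ)⁻¹ := by
          rw [Finset.sum_const, nsmul_eq_mul]
      _ ≤ ((m - κ : ℕ) : ℝ) * ((m - κ : ℕ) : ℝ)⁻¹ := by
          apply mul_le_mul_of_nonneg_right _ (by positivity)
          exact_mod_cast hTcard
      _ ≤ 1 := by
          have hpos : 0 < m - κ := by omega
          have hne : ((m - κ : ℕ) : ℝ) ≠ 0 := by exact_mod_cast hpos.ne'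
          rw [mul_inv_cancel₀ hne]
  
/-- Pointwise rejection (FDP) lemma. -/
lemma FDP_le_sum (hm : 1 ≤ m) (hτ0 : τ 0 = 0)
    (hτmono : ∀ k l, k ≤ l → l ≤ m → τ k ≤ τ l)
    (hτ01 : ∀ k ≤ m, τ k ∈ Set.Icc (0 : ℝ) 1)
    (q : Fin m → ℝ) (hq0 : ∀ j, 0 ≤ q j) (H0 : Finset (Fin m)) :
    FDP m H0 (rejSD m τ q)
      ≤ ∑ i ∈ H0, (if q i ≤ τ (A m τ q i + 1) then ((A m τ q i : ℝ) + 1)⁻¹ else 0) := by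
  classical
  set R := rejSD m τ q with hR
  have hRmem : ∀ i ∈ R ∩ H0, q i ≤ τ (numRejSD m τ q) := by
    intro i hi
    have h1 := (Finset.mem_inter.1 hi).1
    rw [hR, rejSD] at h1
    exact (Finset.mem_filter.1 h1).2
  have hkey : ∀ i ∈ R ∩ H0, ((A m τ q i : ℝ) + 1) ≤ max (R.card : ℝ) 1 := by
    intro i hi
    have h7 := A_succ_le_numRejSD hm hτ0 hτmono hτ01 (hq0 i) (hRmem i hi)
    have hcard : numRejSD m τ q ≤ R.card := numRejSD_le_cnt le_rfl
    have h8 : (A m τ q i + 1 : ℕ) ≤ R.card := le_trans h7 hcard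
    calc ((A m τ q i : ℝ) + 1) = ((A m τ q i + 1 : ℕ) : ℝ) := by push_cast; ring
      _ ≤ (R.card : ℝ) := by exact_mod_cast h8
      _ ≤ max (R.card : ℝ) 1 := le_max_left _ _
  rw [FDP]
  have h1 : ((R ∩ H0).card : ℝ) / max (R.card : ℝ) 1
      = ∑ _i ∈ R ∩ H0, (max (R.card : ℝ) 1)⁻¹ := by
    rw [Finset.sum_const, nsmul_eq_mul, div_eq_mul_inv]
  rw [h1]
  calc ∑ _i ∈ R ∩ H0, (max (R.card : ℝ) 1)⁻¹
      ≤ ∑ i ∈ R ∩ H0, ((A m τ q i : ℝ) + 1)⁻¹ := by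
        apply Finset.sum_le_sum
        intro i hi
        apply inv_anti₀ (by positivity) (hkey i hi)
    _ = ∑ i ∈ R ∩ H0, (if q i ≤ τ (A m τ q i + 1) then ((A m τ q i : ℝ) + 1)⁻¹ else 0) := by
        apply Finset.sum_congr rfl
        intro i hi
        rw [if_pos (rej_le_A_succ hm hτmono hτ01 (hRmem i hi))]
    _ ≤ ∑ i ∈ H0, (if q i ≤ τ (A m τ q i + 1) then ((A m τ q i : ℝ) + 1)⁻¹ else 0) := by
        apply Finset.sum_le_sum_of_subset_of_nonneg (Finset.inter_subset_right)
        intro i _ _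
        split <;> positivity

end detMain

section prob

lemma measurable_cnt (m : ℕ) (τ : ℕ → ℝ) (k : ℕ) :
    Measurable (fun q : Fin m → ℝ => cnt m τ q k) := by
  have h : (fun q : Fin m → ℝ => cnt m τ q k)
      = fun q => ∑ j : Fin m, (if q j ≤ τ k then 1 else 0) := by
    funext q
    rw [cnt, Finset.card_filter]
  rw [h]
  apply Finset.measurable_sum
  intro j _
  exact Measurable.ite (measurableSet_le (measurable_pi_apply j) measurable_const)
    measurable_const measurable_const

lemma measurableSet_SDsetCond (m : ℕ) (τ : ℕ → ℝ) (b : ℕ) :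
    MeasurableSet {q : Fin m → ℝ | b ∈ SDset m τ q} := by
  by_cases hb : b ≤ m
  · have he : {q : Fin m → ℝ | b ∈ SDset m τ q}
        = ⋂ (k' : ℕ) (_ : k' ≤ b), {q | k' ≤ cnt m τ q k'} := by
      ext q
      simp [SDset, hb]
    rw [he]
    exact MeasurableSet.iInter fun k' => MeasurableSet.iInter fun _ =>
      measurableSet_le measurable_const (measurable_cnt m τ k')
  · have he : {q : Fin m → ℝ | b ∈ SDset m τ q} = ∅ := by
      ext q; simp [SDset, hb]
    rw [he]; exact MeasurableSet.empty

lemma measurable_numRejSD (m : ℕ) (τ : ℕ → ℝ) : Measurable (numRejSD m τ) := by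
  apply measurable_to_countable'
  intro a
  have he : numRejSD m τ ⁻¹' {a}
      = {q | a ∈ SDset m τ q} ∩ {q | (a + 1) ∈ SDset m τ q}ᶜ := by
    ext q
    simp only [Set.mem_preimage, Set.mem_singleton_iff, Set.mem_inter_iff, Set.mem_compl_iff,
      Set.mem_setOf_eq]
    exact numRejSD_eq_iff
  rw [he]
  exact (measurableSet_SDsetCond m τ a).inter (measurableSet_SDsetCond m τ (a + 1)).compl

variable {Ω : Type*} [MeasurableSpace Ω]

lemma main (P : Measure Ω) [IsProbabilityMeasure P]
    (m : ℕ) (hm : 1 ≤ m)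
    (p : Fin m → Ω → ℝ) (hmeas : ∀ i, Measurable (p i))
    (hp01 : ∀ i ω, p i ω ∈ Set.Icc (0 : ℝ) 1)
    (hindep : iIndepFun p P)
    (H0 : Finset (Fin m))
    (hnull : ∀ i ∈ H0, ∀ t ∈ Set.Icc (0 : ℝ) 1,
      P {ω | p i ω ≤ t} ≤ ENNReal.ofReal t)
    (τ : ℕ → ℝ) (hτ0 : τ 0 = 0)
    (hτmono : ∀ k l, k ≤ l → l ≤ m → τ k ≤ τ l)
    (hτ01 : ∀ k ≤ m, τ k ∈ Set.Icc (0 : ℝ) 1)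
    (hτlt1 : ∀ k, 1 ≤ k → k ≤ m → τ k < 1)
    (C : ℝ)
    (hC : ∀ k, 1 ≤ k → k ≤ m → ((m - k + 1 : ℕ) : ℝ) / (1 - τ k) * (τ k / (k : ℝ)) ≤ C) :
    ∫ ω, FDP m H0 (rejSD m τ (fun j => p j ω)) ∂P ≤ C := by
  classical
  -- the leave-one-out step-down count
  set Af : Fin m → Ω → ℕ := fun i ω => A m τ (fun j => p j ω) i with hAf
  have hAmeas : ∀ i, Measurable (Af i) := by
    intro i
    apply (measurable_numRejSD m τ).comp
    apply measurable_pi_lambda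
    intro j
    have he : (fun ω => Function.update (fun j' => p j' ω) i 2 j)
        = fun ω => if j = i then 2 else p j ω := by
      funext ω
      rw [Function.update_apply]
    rw [he]
    by_cases h : j = i
    · simp only [h, if_pos rfl]; exact measurable_const
    · simp only [h, if_neg h]; exact hmeas j
  have hAlt' : ∀ i ω, Af i ω < m := fun i ω => A_lt hm hτ01
  -- independence of `p i` and `Af i`
  have hindepA : ∀ i, IndepFun (p i) (Af i) P := by
    intro i
    have hdisj : Disjoint ({i} : Finset (Fin m)) ({i}ᶜ : Finset (Fin m)) :=
      disjoint_compl_right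
    have h := hindep.indepFun_finset {i} ({i}ᶜ : Finset (Fin m)) hdisj hmeas
    set φ : (({i} : Finset (Fin m)) → ℝ) → ℝ :=
      fun v => v ⟨i, Finset.mem_singleton_self i⟩ with hφ
    set ψ : ((({i}ᶜ : Finset (Fin m)) : Finset (Fin m)) → ℝ) → ℕ :=
      fun v => numRejSD m τ (fun j =>
        if hj : j = i then 2 else v ⟨j, by
          simp [Finset.mem_compl, Finset.mem_singleton, hj]⟩) with hψ
    have hφm : Measurable φ := measurable_pi_apply _
    have hψm : Measurable ψ := by
      apply (measurable_numRejSD m τ).comp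
      apply measurable_pi_lambda
      intro j
      by_cases hj : j = i
      · simp only [hj, dif_pos rfl]; exact measurable_const
      · simp only [dif_neg hj]; exact measurable_pi_apply _
    have h2 := h.comp hφm hψm
    have hfeq : (φ ∘ fun ω (j : ({i} : Finset (Fin m))) => p j ω) = p i := rfl
    have hgeq : (ψ ∘ fun ω (j : (({i}ᶜ : Finset (Fin m)) : Finset (Fin m))) => p j ω)
        = Af i := by
      funext ω
      show numRejSD m τ _ = numRejSD m τ _
      congr 1
      funext j
      by_cases hj : j = i
      · simp [hj, Function.update_apply]
      · simp [hj, Function.update_apply]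
    rw [hfeq, hgeq] at h2
    exact h2
  -- events
  set E1 : Fin m → ℕ → Set Ω := fun i a => {ω | p i ω ≤ τ (a + 1)} ∩ {ω | Af i ω = a} with hE1def
  set E2 : Fin m → ℕ → Set Ω := fun i a => {ω | τ (a + 1) < p i ω} ∩ {ω | Af i ω = a} with hE2def
  have hE1m : ∀ i a, MeasurableSet (E1 i a) := fun i a =>
    (measurableSet_le (hmeas i) measurable_const).inter ((hAmeas i) (measurableSet_singleton a))
  have hE2m : ∀ i a, MeasurableSet (E2 i a) := fun i a =>
    (measurableSet_lt measurable_const (hmeas i)).inter ((hAmeas i) (measurableSet_singleton a))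
  -- integrand functions
  set g : Fin m → Ω → ℝ := fun i ω => ∑ a ∈ Finset.range m,
      Set.indicator (E1 i a) (fun _ => ((a : ℝ) + 1)⁻¹) ω with hgdef
  set h : Fin m → Ω → ℝ := fun i ω => ∑ a ∈ Finset.range m,
      Set.indicator (E2 i a) (fun _ => ((m - a : ℕ) : ℝ)⁻¹) ω with hhdef
  have hgint : ∀ i, Integrable (g i) P := fun i =>
    integrable_finset_sum _ (fun a _ => (integrable_const _).indicator (hE1m i a))
  have hhint : ∀ i, Integrable (h i) P := fun i =>
    integrable_finset_sum _ (fun a _ => (integrable_const _).indicator (hE2m i a))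
  have hgval : ∀ i ω,
      g i ω = if p i ω ≤ τ (Af i ω + 1) then ((Af i ω : ℝ) + 1)⁻¹ else 0 := by
    intro i ω
    rw [hgdef]
    simp only
    rw [Finset.sum_eq_single (Af i ω)]
    · have hmem : ω ∈ E1 i (Af i ω) ↔ p i ω ≤ τ (Af i ω + 1) := by
        simp [hE1def]
      rw [Set.indicator_apply, if_congr hmem rfl rfl]
    · intro b _ hb
      apply Set.indicator_of_notMem
      intro hmem
      exact hb.symm ((Set.mem_inter_iff _ _ _).1 hmem).2
    · intro hnot
      exact absurd (Finset.mem_range.2 (hAlt' i ω)) hnot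
  have hhval : ∀ i ω,
      h i ω = if τ (Af i ω + 1) < p i ω then ((m - Af i ω : ℕ) : ℝ)⁻¹ else 0 := by
    intro i ω
    rw [hhdef]
    simp only
    rw [Finset.sum_eq_single (Af i ω)]
    · have hmem : ω ∈ E2 i (Af i ω) ↔ τ (Af i ω + 1) < p i ω := by
        simp [hE2def]
      rw [Set.indicator_apply, if_congr hmem rfl rfl]
    · intro b _ hb
      apply Set.indicator_of_notMem
      intro hmem
      exact hb.symm ((Set.mem_inter_iff _ _ _).1 hmem).2
    · intro hnot
      exact absurd (Finset.mem_range.2 (hAlt' i ω)) hnot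
  -- C is nonnegative
  have hC0 : 0 ≤ C := by
    refine le_trans ?_ (hC 1 le_rfl hm)
    have h1 := (hτ01 1 hm).1
    have h2 : τ 1 < 1 := hτlt1 1 le_rfl hm
    have h3 : (0:ℝ) < 1 - τ 1 := by linarith
    positivity
  -- step 1 : FDR ≤ ∑_{i ∈ H0} ∫ g i
  have step1 : ∫ ω, FDP m H0 (rejSD m τ (fun j => p j ω)) ∂P
      ≤ ∑ i ∈ H0, ∫ ω, g i ω ∂P := by
    rw [← integral_finset_sum _ (fun i _ => hgint i)]
    apply integral_mono_of_nonneg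
    · filter_upwards with ω
      rw [FDP]
      positivity
    · exact integrable_finset_sum _ (fun i _ => hgint i)
    · filter_upwards with ω
      refine le_trans (FDP_le_sum hm hτ0 hτmono hτ01 (fun j => p j ω)
        (fun j => (hp01 j ω).1) H0) (le_of_eq ?_)
      apply Finset.sum_congr rfl
      intro i _
      rw [hgval i ω]
  -- value of ∫ g i and ∫ h i
  have hgi : ∀ i, ∫ ω, g i ω ∂P
      = ∑ a ∈ Finset.range m, (P (E1 i a)).toReal * ((a : ℝ) + 1)⁻¹ := by
    intro i
    rw [integral_finset_sum _ (fun a _ => (integrable_const _).indicator (hE1m i a))]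
    apply Finset.sum_congr rfl
    intro a _
    rw [integral_indicator_const _ (hE1m i a), smul_eq_mul, measureReal_def]
  have hhi : ∀ i, ∫ ω, h i ω ∂P
      = ∑ a ∈ Finset.range m, (P (E2 i a)).toReal * ((m - a : ℕ) : ℝ)⁻¹ := by
    intro i
    rw [integral_finset_sum _ (fun a _ => (integrable_const _).indicator (hE2m i a))]
    apply Finset.sum_congr rfl
    intro a _
    rw [integral_indicator_const _ (hE2m i a), smul_eq_mul, measureReal_def]
  -- key per-term inequality
  have key : ∀ i ∈ H0, ∀ a ∈ Finset.range m,
      (P (E1 i a)).toReal * ((a : ℝ) + 1)⁻¹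
        ≤ C * ((P (E2 i a)).toReal * ((m - a : ℕ) : ℝ)⁻¹) := by
    intro i hi a ha
    have ham : a + 1 ≤ m := Finset.mem_range.1 ha
    set t := τ (a + 1) with htdef
    have ht01 := hτ01 (a + 1) ham
    have ht1 : t < 1 := hτlt1 (a + 1) (by omega) ham
    have ht0 : 0 ≤ t := ht01.1
    -- product structure
    have hPE1 : P (E1 i a) = P {ω | p i ω ≤ t} * P {ω | Af i ω = a} :=
      (hindepA i).measure_inter_preimage_eq_mul (Set.Iic t) {a}
        measurableSet_Iic (measurableSet_singleton a)
    have hPE2 : P (E2 i a) = P {ω | t < p i ω} * P {ω | Af i ω = a} :=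
      (hindepA i).measure_inter_preimage_eq_mul (Set.Ioi t) {a}
        measurableSet_Ioi (measurableSet_singleton a)
    set x := (P {ω | p i ω ≤ t}).toReal with hxdef
    set x' := (P {ω | t < p i ω}).toReal with hx'def
    set y := (P {ω | Af i ω = a}).toReal with hydef
    have hy0 : 0 ≤ y := ENNReal.toReal_nonneg
    have hx0 : 0 ≤ x' := ENNReal.toReal_nonneg
    have hxle : x ≤ t := by
      have := hnull i hi t ht01
      rw [hxdef]
      calc (P {ω | p i ω ≤ t}).toReal ≤ (ENNReal.ofReal t).toReal :=
        ENNReal.toReal_mono ENNReal.ofReal_ne_top this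
      _ = t := ENNReal.toReal_ofReal ht0
    have hx'ge : 1 - t ≤ x' := by
      have hcompl : {ω | t < p i ω} = {ω | p i ω ≤ t}ᶜ := by
        ext ω; simp [not_le]
      have h1 : ENNReal.ofReal (1 - t) ≤ P {ω | t < p i ω} := by
        rw [hcompl, measure_compl (measurableSet_le (hmeas i) measurable_const)
          (measure_ne_top P _), measure_univ]
        calc ENNReal.ofReal (1 - t) = 1 - ENNReal.ofReal t := by
              rw [ENNReal.ofReal_sub _ ht0, ENNReal.ofReal_one]
        _ ≤ 1 - P {ω | p i ω ≤ t} := tsub_le_tsub_left (hnull i hi t ht01) 1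
      calc 1 - t = (ENNReal.ofReal (1 - t)).toReal := by
            rw [ENNReal.toReal_ofReal (by linarith)]
      _ ≤ x' := ENNReal.toReal_mono (measure_ne_top P _) h1
    have hE1v : (P (E1 i a)).toReal = x * y := by
      rw [hPE1, ENNReal.toReal_mul]
    have hE2v : (P (E2 i a)).toReal = x' * y := by
      rw [hPE2, ENNReal.toReal_mul]
    set D : ℝ := ((m - a : ℕ) : ℝ) with hDdef
    have hD0 : (0 : ℝ) < D := by
      rw [hDdef]
      have : 0 < m - a := by omega
      exact_mod_cast this
    have hCk := hC (a + 1) (by omega) ham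
    have hcast : ((m - (a + 1) + 1 : ℕ) : ℝ) = D := by
      rw [hDdef]
      congr 1
      omega
    rw [hcast] at hCk
    -- hCk : D / (1 - t) * (t / (a+1)) ≤ C
    have hcast2 : ((a + 1 : ℕ) : ℝ) = (a : ℝ) + 1 := by push_cast; ring
    rw [hcast2] at hCk
    have ht1' : (0 : ℝ) < 1 - t := by linarith
    have ha1 : (0 : ℝ) < (a : ℝ) + 1 := by positivity
    have h2 : t / ((a : ℝ) + 1) ≤ C * ((1 - t) / D) := by
      have e : D / (1 - t) * (t / ((a : ℝ) + 1)) * ((1 - t) / D) = t / ((a : ℝ) + 1) := by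
        field_simp
      calc t / ((a : ℝ) + 1)
          = D / (1 - t) * (t / ((a : ℝ) + 1)) * ((1 - t) / D) := e.symm
        _ ≤ C * ((1 - t) / D) := by
            apply mul_le_mul_of_nonneg_right hCk
            positivity
    calc (P (E1 i a)).toReal * ((a : ℝ) + 1)⁻¹ = x * y * ((a : ℝ) + 1)⁻¹ := by rw [hE1v]
      _ ≤ t * y * ((a : ℝ) + 1)⁻¹ := by
          apply mul_le_mul_of_nonneg_right (mul_le_mul_of_nonneg_right hxle hy0)
          positivity
      _ = (t / ((a : ℝ) + 1)) * y := by ring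
      _ ≤ (C * ((1 - t) / D)) * y := mul_le_mul_of_nonneg_right h2 hy0
      _ ≤ (C * (x' / D)) * y := by
          apply mul_le_mul_of_nonneg_right _ hy0
          apply mul_le_mul_of_nonneg_left _ hC0
          exact div_le_div_of_nonneg_right hx'ge hD0.le
      _ = C * ((P (E2 i a)).toReal * D⁻¹) := by rw [hE2v]; ring
  -- step 2 : assemble
  have step2 : ∑ i ∈ H0, ∫ ω, g i ω ∂P ≤ C * ∑ i ∈ H0, ∫ ω, h i ω ∂P := by
    rw [Finset.mul_sum]
    apply Finset.sum_le_sum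
    intro i hi
    rw [hgi i, hhi i, Finset.mul_sum]
    apply Finset.sum_le_sum
    intro a ha
    exact key i hi a ha
  -- step 3 : ∑_{i ∈ H0} ∫ h i ≤ 1
  have step3 : ∑ i ∈ H0, ∫ ω, h i ω ∂P ≤ 1 := by
    have hnn : ∀ i, 0 ≤ ∫ ω, h i ω ∂P := by
      intro i
      apply integral_nonneg
      intro ω
      rw [hhval i ω]
      split <;> positivity
    calc ∑ i ∈ H0, ∫ ω, h i ω ∂P ≤ ∑ i ∈ Finset.univ, ∫ ω, h i ω ∂P :=
        Finset.sum_le_sum_of_subset_of_nonneg (Finset.subset_univ H0)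
          (fun i _ _ => hnn i)
      _ = ∫ ω, (∑ i ∈ Finset.univ, h i ω) ∂P :=
        (integral_finset_sum _ (fun i _ => hhint i)).symm
      _ ≤ ∫ ω, (1 : ℝ) ∂P := by
          apply integral_mono_of_nonneg
          · filter_upwards with ω
            apply Finset.sum_nonneg
            intro i _
            rw [hhval i ω]
            split <;> positivity
          · exact integrable_const 1
          · filter_upwards with ω
            have := sum_acc_le_one hm hτ01 hτmono (fun j => p j ω)
            calc ∑ i ∈ Finset.univ, h i ω
                = ∑ i : Fin m, (if τ (A m τ (fun j => p j ω) i + 1) < p i ω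
                    then ((m - A m τ (fun j => p j ω) i : ℕ) : ℝ)⁻¹ else 0) := by
                  apply Finset.sum_congr rfl
                  intro i _
                  rw [hhval i ω]
              _ ≤ 1 := this
      _ = 1 := by simp
  calc ∫ ω, FDP m H0 (rejSD m τ (fun j => p j ω)) ∂P
      ≤ ∑ i ∈ H0, ∫ ω, g i ω ∂P := step1
    _ ≤ C * ∑ i ∈ H0, ∫ ω, h i ω ∂P := step2
    _ ≤ C * 1 := mul_le_mul_of_nonneg_left step3 hC0
    _ = C := mul_one C

end prob

end FDR6aux

/-- under super-uniform null p-values and `τ_k < 1` for all `k`,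
`FDR(SD(τ)) ≤ max_{1 ≤ k ≤ m} ((m-k+1)/(1-τ_k)) · (τ_k/k)`; in particular the
Gavrilov-Benjamini-Sarkar step-down procedure `τ_k = αk/(m-(1-α)k+1)` has `FDR ≤ α`. -/
theorem fdr_sd_superuniform_adaptive_bound_and_GBS
    {Ω : Type*} [MeasurableSpace Ω] (P : Measure Ω) [IsProbabilityMeasure P]
    (m : ℕ) (hm : 1 ≤ m)
    (p : Fin m → Ω → ℝ) (hmeas : ∀ i, Measurable (p i))
    (hp01 : ∀ i ω, p i ω ∈ Set.Icc (0 : ℝ) 1)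
    (hindep : iIndepFun p P)
    (H0 : Finset (Fin m))
    (hnull : ∀ i ∈ H0, ∀ t ∈ Set.Icc (0 : ℝ) 1,
      P {ω | p i ω ≤ t} ≤ ENNReal.ofReal t)
    (τ : ℕ → ℝ) (hτ0 : τ 0 = 0)
    (hτmono : ∀ k l, k ≤ l → l ≤ m → τ k ≤ τ l)
    (hτ01 : ∀ k ≤ m, τ k ∈ Set.Icc (0 : ℝ) 1)
    (hτlt1 : ∀ k, 1 ≤ k → k ≤ m → τ k < 1)
    (α : ℝ) (hα : α ∈ Set.Ioo (0 : ℝ) 1) :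
    (∫ ω, FDP m H0 (rejSD m τ (fun j => p j ω)) ∂P
      ≤ (Finset.Icc 1 m).sup' (Finset.nonempty_Icc.mpr hm)
          (fun k => ((m - k + 1 : ℕ) : ℝ) / (1 - τ k) * (τ k / (k : ℝ))))
    ∧ (∫ ω, FDP m H0
          (rejSD m (fun k => α * k / ((m : ℝ) - (1 - α) * k + 1)) (fun j => p j ω)) ∂P
        ≤ α) := by
  obtain ⟨hα0, hα1⟩ := hα
  constructor
  · apply FDR6aux.main P m hm p hmeas hp01 hindep H0 hnull τ hτ0 hτmono hτ01 hτlt1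
    intro k hk1 hk2
    exact Finset.le_sup' (f := fun k => ((m - k + 1 : ℕ) : ℝ) / (1 - τ k) * (τ k / (k : ℝ)))
      (Finset.mem_Icc.mpr ⟨hk1, hk2⟩)
  · set σ : ℕ → ℝ := fun k => α * k / ((m : ℝ) - (1 - α) * k + 1) with hσ
    have hden : ∀ k : ℕ, k ≤ m → (0 : ℝ) < (m : ℝ) - (1 - α) * k + 1 := by
      intro k hk
      have hk' : (k : ℝ) ≤ m := by exact_mod_cast hk
      have h1 : (1 - α) * k ≤ (k : ℝ) := by
        have hk0 : (0 : ℝ) ≤ k := Nat.cast_nonneg k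
        nlinarith
      linarith
    have hσ0 : σ 0 = 0 := by simp [hσ]
    have hσmono : ∀ k l, k ≤ l → l ≤ m → σ k ≤ σ l := by
      intro k l hkl hl
      have hdk := hden k (le_trans hkl hl)
      have hdl := hden l hl
      rw [hσ]
      rw [div_le_div_iff₀ hdk hdl]
      have hkl' : (k : ℝ) ≤ l := by exact_mod_cast hkl
      have hk0 : (0 : ℝ) ≤ k := Nat.cast_nonneg k
      have hl0 : (0 : ℝ) ≤ l := Nat.cast_nonneg l
      have hm0 : (0 : ℝ) ≤ m := Nat.cast_nonneg m
      nlinarith [mul_nonneg (mul_nonneg hα0.le (sub_nonneg.2 hkl'))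
        (by linarith : (0 : ℝ) ≤ (m : ℝ) + 1)]
    have hσ01 : ∀ k ≤ m, σ k ∈ Set.Icc (0 : ℝ) 1 := by
      intro k hk
      have hd := hden k hk
      have hk' : (k : ℝ) ≤ m := by exact_mod_cast hk
      have hk0 : (0 : ℝ) ≤ k := Nat.cast_nonneg k
      constructor
      · apply div_nonneg _ hd.le
        positivity
      · rw [div_le_one hd]
        nlinarith
    have hσlt1 : ∀ k, 1 ≤ k → k ≤ m → σ k < 1 := by
      intro k hk1 hk
      have hd := hden k hk
      have hk' : (k : ℝ) ≤ m := by exact_mod_cast hk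
      have hk0 : (0 : ℝ) ≤ k := Nat.cast_nonneg k
      rw [hσ, div_lt_one hd]
      nlinarith
    apply FDR6aux.main P m hm p hmeas hp01 hindep H0 hnull σ hσ0 hσmono hσ01 hσlt1
    intro k hk1 hk2
    apply le_of_eq
    have hd := hden k hk2
    have hk' : (k : ℝ) ≤ m := by exact_mod_cast hk2
    have hk0 : (0 : ℝ) < k := by exact_mod_cast hk1
    set d : ℝ := (m : ℝ) - (1 - α) * k + 1 with hddef
    have hmk1 : (0 : ℝ) < (m : ℝ) - k + 1 := by linarith
    have hcast : ((m - k + 1 : ℕ) : ℝ) = (m : ℝ) - k + 1 := by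
      have h1 : (m - k + 1 : ℕ) = m + 1 - k := by omega
      rw [h1, Nat.cast_sub (by omega)]
      push_cast
      ring
    have h1t : 1 - σ k = ((m : ℝ) - k + 1) / d := by
      have hs : σ k = α * k / d := rfl
      rw [hs, eq_div_iff hd.ne', sub_mul, div_mul_cancel₀ _ hd.ne', hddef]
      ring
    have hs : σ k = α * k / d := rfl
    rw [hcast, h1t, hs, div_div_cancel₀ hmk1.ne']
    field_simp
end
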